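/- Let G be an r-SPTG in which every non-final location is urgent, and let ν ∈ [0,r]. For every location ℓ, Val_G(ℓ,ν) belongs to possval_ν ∪ {−∞, +∞}, where Z*_ν = {n + φ_ℓ(ν) : n ∈ ℤ, ℓ ∈ L_f} and possval_ν = [−(|L|−1)·P_T − P_f, |L|·P_T + P_f] ∩ Z*_ν. Moreover possval_ν has cardinality at most |L_f|·((2|L|−1)·P_T + 2·P_f + 1). -/

import Mathlib

/-!
Common formalization of one-clock priced timed games (PTGs), following
"Simple Priced Timed Games are not That Simple".
-/

namespace PTGPaper

/-- The three kinds of locations: locations of player Min, of player Max, and final locations. -/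
inductive Owner : Type
  | min : Owner
  | max : Owner
  | final : Owner
deriving DecidableEq

/-- A transition of a one-clock priced timed game: a source location, a guard
(an interval with endpoints `lo`, `hi`, with openness flags `loOpen`, `hiOpen`),
a reset flag, a discrete price, and a target location. -/
structure PTrans (L : Type) where
  src : L
  lo : ℝ
  hi : ℝ
  loOpen : Bool
  hiOpen : Bool
  reset : Bool
  price : ℤ
  tgt : L

noncomputable instance {L : Type} : DecidableEq (PTrans L) := Classical.decEq _

/-- Membership of a clock value in the guard of a transition. -/
def PTrans.memGuard {L : Type} (δ : PTrans L) (ν : ℝ) : Prop :=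
  (if δ.loOpen then δ.lo < ν else δ.lo ≤ ν) ∧
  (if δ.hiOpen then ν < δ.hi else ν ≤ δ.hi)

/-- A one-clock priced timed game. -/
structure PTG where
  Loc : Type
  locFin : Fintype Loc
  locDec : DecidableEq Loc
  owner : Loc → Owner
  urgent : Loc → Bool
  M : ℕ
  trans : Finset (PTrans Loc)
  price : Loc → ℤ
  fcost : Loc → ℝ → ℝ

attribute [instance] PTG.locFin PTG.locDec

/-- A configuration: a location together with a clock valuation. -/
abbrev PTG.Config (G : PTG) := G.Loc × ℝ

/-- `G.Move s s' t δ c` holds if from configuration `s`, waiting `t` time units and then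
taking transition `δ` is legal, leads to configuration `s'` and costs `c`. -/
def PTG.Move (G : PTG) (s s' : G.Config) (t : ℝ) (δ : PTrans G.Loc) (c : ℝ) : Prop :=
  δ ∈ G.trans ∧ δ.src = s.1 ∧ 0 ≤ t ∧ (G.urgent s.1 = true → t = 0) ∧
  δ.memGuard (s.2 + t) ∧ s'.1 = δ.tgt ∧
  s'.2 = (if δ.reset then 0 else s.2 + t) ∧
  c = (δ.price : ℝ) + t * (G.price s.1 : ℝ)

/-- A finite play (history): an initial configuration followed by a list of steps,
each step consisting of a delay, the transition taken, and the configuration reached. -/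
structure Hist (L : Type) where
  start : L × ℝ
  steps : List (ℝ × PTrans L × (L × ℝ))

namespace Hist

variable {L : Type}

def lastFrom (s : L × ℝ) : List (ℝ × PTrans L × (L × ℝ)) → L × ℝ
  | [] => s
  | (_, _, s') :: rest => lastFrom s' rest

/-- The last configuration of a finite play. -/
def last (h : Hist L) : L × ℝ := lastFrom h.start h.steps

def costFrom (π : L → ℤ) (s : L × ℝ) : List (ℝ × PTrans L × (L × ℝ)) → ℝ
  | [] => 0
  | (t, δ, s') :: rest => ((δ.price : ℝ) + t * (π s.1 : ℝ)) + costFrom π s' rest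

/-- The sum of the prices of the discrete transitions along a finite play. -/
def discSum (h : Hist L) : ℤ := (h.steps.map (fun st => st.2.1.price)).sum

/-- The prefix of a finite play consisting of its first `i` steps. -/
def take (h : Hist L) (i : ℕ) : Hist L := ⟨h.start, h.steps.take i⟩

end Hist

/-- Validity of a sequence of steps, starting from a given configuration. -/
def PTG.ValidFrom (G : PTG) : G.Config → List (ℝ × PTrans G.Loc × G.Config) → Prop
  | _, [] => True
  | s, (t, δ, s') :: rest => (∃ c, G.Move s s' t δ c) ∧ G.ValidFrom s' rest

/-- A valid finite play of `G`. -/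
def PTG.HistValid (G : PTG) (h : Hist G.Loc) : Prop :=
  0 ≤ h.start.2 ∧ h.start.2 ≤ (G.M : ℝ) ∧ G.ValidFrom h.start h.steps

/-- Accumulated cost of the moves of a finite play (without any final cost). -/
def PTG.accCost (G : PTG) (h : Hist G.Loc) : ℝ := Hist.costFrom G.price h.start h.steps

/-- A (deterministic) strategy, given as a function from finite plays to
a pair (delay, transition). -/
abbrev StratFun (L : Type) := Hist L → ℝ × PTrans L

/-- A finite play is consistent with strategy `σ` of the player owning locations of kind `P`
if at every step taken from a location of that player, the move is the one prescribed
by `σ` on the corresponding prefix. -/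
def PTG.Consistent (G : PTG) (P : Owner) (σ : StratFun G.Loc) (h : Hist G.Loc) : Prop :=
  ∀ (i : ℕ) (hi : i < h.steps.length),
    G.owner (h.take i).last.1 = P →
    ((h.steps.get ⟨i, hi⟩).1, (h.steps.get ⟨i, hi⟩).2.1) = σ (h.take i)

/-- A strategy of the player owning the locations of kind `P` is valid if it proposes
a legal move after every valid finite play ending in a location of that player. -/
def PTG.StratValid (G : PTG) (P : Owner) (σ : StratFun G.Loc) : Prop :=
  ∀ h : Hist G.Loc, G.HistValid h → G.owner h.last.1 = P →
    ∃ s' c, G.Move h.last s' (σ h).1 (σ h).2 c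

def PTG.MinValid (G : PTG) (σ : StratFun G.Loc) : Prop := G.StratValid Owner.min σ

def PTG.MaxValid (G : PTG) (τ : StratFun G.Loc) : Prop := G.StratValid Owner.max τ

/-- The configuration reached from `s` by the move `td = (delay, transition)`. -/
def PTG.nextCfg (G : PTG) (s : G.Config) (td : ℝ × PTrans G.Loc) : G.Config :=
  (td.2.tgt, if td.2.reset then 0 else s.2 + td.1)

/-- The finite play of length (at most) `n` obtained from initial configuration `s₀` when
Min plays `σ` and Max plays `τ` (the play stops growing when a final location is reached). -/
def PTG.histOf (G : PTG) (σ τ : StratFun G.Loc) (s₀ : G.Config) : ℕ → Hist G.Loc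
  | 0 => ⟨s₀, []⟩
  | n + 1 =>
    let h := G.histOf σ τ s₀ n
    if G.owner h.last.1 = Owner.final then h
    else
      let td := if G.owner h.last.1 = Owner.min then σ h else τ h
      ⟨h.start, h.steps ++ [(td.1, td.2, G.nextCfg h.last td)]⟩

open Classical in
/-- The cost of the play from `s₀` determined by the profile `(σ, τ)`: `+∞` if no final
location is ever reached, and otherwise the accumulated cost up to the first visit of a
final location, plus the final cost function of that location evaluated at the current
clock value. -/
noncomputable def PTG.playCost (G : PTG) (σ τ : StratFun G.Loc) (s₀ : G.Config) : EReal :=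
  if hx : ∃ n, G.owner ((G.histOf σ τ s₀ n).last.1) = Owner.final then
    (((G.accCost (G.histOf σ τ s₀ (Nat.find hx)) +
        G.fcost ((G.histOf σ τ s₀ (Nat.find hx)).last.1)
          ((G.histOf σ τ s₀ (Nat.find hx)).last.2)) : ℝ) : EReal)
  else ⊤

/-- `Val^σ(s)`, the value of a Min strategy `σ`. -/
noncomputable def PTG.minValue (G : PTG) (σ : StratFun G.Loc) (s : G.Config) : EReal :=
  ⨆ τ : {τ : StratFun G.Loc // G.MaxValid τ}, G.playCost σ τ.1 s

/-- `Val^τ(s)`, the value of a Max strategy `τ`. -/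
noncomputable def PTG.maxValue (G : PTG) (τ : StratFun G.Loc) (s : G.Config) : EReal :=
  ⨅ σ : {σ : StratFun G.Loc // G.MinValid σ}, G.playCost σ.1 τ s

/-- The upper value of the game. -/
noncomputable def PTG.uval (G : PTG) (s : G.Config) : EReal :=
  ⨅ σ : {σ : StratFun G.Loc // G.MinValid σ}, G.minValue σ.1 s

/-- The lower value of the game. -/
noncomputable def PTG.lval (G : PTG) (s : G.Config) : EReal :=
  ⨆ τ : {τ : StratFun G.Loc // G.MaxValid τ}, G.maxValue τ.1 s

/-- The value of the game (games are determined, so this coincides with the upper value). -/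
noncomputable def PTG.val (G : PTG) (s : G.Config) : EReal := G.lval s

/-- The fake value of a Min strategy `σ` at configuration `s`: the supremum of the costs of
the plays consistent with `σ` from `s` that do reach a final location. -/
noncomputable def PTG.fakeVal (G : PTG) (σ : StratFun G.Loc) (s : G.Config) : EReal :=
  sSup {x : EReal | ∃ h : Hist G.Loc, h.start = s ∧ G.HistValid h ∧
    G.Consistent Owner.min σ h ∧ G.owner h.last.1 = Owner.final ∧
    x = (((G.accCost h + G.fcost h.last.1 h.last.2) : ℝ) : EReal)}

/-- Well-formedness of a PTG: transitions leave non-final locations only, guards are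
contained in `[0, M]`, urgent locations are non-final, final cost functions are affine with
rational coefficients, and the game is deadlock-free. -/
def PTG.WF (G : PTG) : Prop :=
  (∀ δ ∈ G.trans, G.owner δ.src ≠ Owner.final) ∧
  (∀ δ ∈ G.trans, 0 ≤ δ.lo ∧ δ.hi ≤ (G.M : ℝ)) ∧
  (∀ ℓ, G.urgent ℓ = true → G.owner ℓ ≠ Owner.final) ∧
  (∀ ℓ, G.owner ℓ = Owner.final → ∃ a b : ℚ, ∀ ν : ℝ, G.fcost ℓ ν = (a : ℝ) * ν + (b : ℝ)) ∧
  (∀ (ℓ : G.Loc) (ν : ℝ), G.owner ℓ ≠ Owner.final → 0 ≤ ν → ν ≤ (G.M : ℝ) →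
    ∃ s' t δ c, G.Move (ℓ, ν) s' t δ c)

/-- All guards have natural-number endpoints. -/
def PTG.NatEndpoints (G : PTG) : Prop :=
  ∀ δ ∈ G.trans, (∃ n : ℕ, δ.lo = (n : ℝ)) ∧ ∃ n : ℕ, δ.hi = (n : ℝ)

/-- `P_T`: the largest absolute value of a transition price. -/
def PTG.PT (G : PTG) : ℕ := G.trans.sup fun δ => δ.price.natAbs

/-- `P_L`: the largest absolute value of a location price-rate. -/
def PTG.PL (G : PTG) : ℕ := Finset.univ.sup fun ℓ : G.Loc => (G.price ℓ).natAbs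

/-- `P_f`: the largest absolute value taken by a final cost function on `[0, r]`. -/
noncomputable def PTG.Pf (G : PTG) (r : ℝ) : ℝ :=
  sSup {x : ℝ | ∃ (ℓ : G.Loc) (ν : ℝ), G.owner ℓ = Owner.final ∧ 0 ≤ ν ∧ ν ≤ r ∧
    x = |G.fcost ℓ ν|}

/-- The number of locations `|L|`. -/
def PTG.nLoc (G : PTG) : ℕ := Fintype.card G.Loc

/-- The number of final locations `|L_f|`. -/
def PTG.nFin (G : PTG) : ℕ :=
  (Finset.univ.filter fun ℓ : G.Loc => G.owner ℓ = Owner.final).card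

/-- A measure of the size of `G` (locations, transitions, and binary encodings of
the numerical constants). -/
def PTG.size (G : PTG) : ℕ :=
  G.nLoc + G.trans.card + Nat.log2 (G.M + 2) + Nat.log2 (G.PT + 2) + Nat.log2 (G.PL + 2) + 2

/-- `G` is an `r`-SPTG: every transition has guard `[0, r]` and performs no reset. -/
def PTG.IsSPTG (G : PTG) (r : ℝ) : Prop :=
  0 ≤ r ∧ r ≤ 1 ∧ ∀ δ ∈ G.trans,
    δ.lo = 0 ∧ δ.hi = r ∧ δ.loOpen = false ∧ δ.hiOpen = false ∧ δ.reset = false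

/-- The left end of the `i`-th interval determined by the points `pt` (with the convention
`ν₀ = min 0 (pt 0)`). -/
def prevPt {k : ℕ} (pt : Fin (k + 1) → ℝ) (i : Fin (k + 1)) : ℝ :=
  if (i : ℕ) = 0 then min 0 (pt 0) else
    pt ⟨(i : ℕ) - 1, lt_of_le_of_lt (Nat.sub_le _ _) i.isLt⟩

/-- A finite positional (FP) strategy of the player owning locations of kind `P` in an
`r`-SPTG: a memoryless strategy which, on each location of that player, is described by
finitely many rational threshold points `0 ≤ ν₁ < ⋯ < ν_k = r` and transitions
`δ₁, …, δ_k`, and on each induced interval either always plays immediately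
or always waits until the right endpoint of the interval. -/
structure FPStrat (G : PTG) (r : ℝ) (P : Owner) where
  strat : StratFun G.Loc
  valid : G.StratValid P strat
  memoryless : ∀ h h' : Hist G.Loc, G.HistValid h → G.HistValid h' →
    h.last = h'.last → strat h = strat h'
  points : Finset ℝ
  points_rat : ∀ p ∈ points, ∃ q : ℚ, p = (q : ℝ)
  points_mem : ∀ p ∈ points, 0 ≤ p ∧ p ≤ r
  r_mem : r ∈ points
  piecewise : ∀ ℓ : G.Loc, G.owner ℓ = P →
    ∃ (k : ℕ) (pt : Fin (k + 1) → ℝ) (δ : Fin (k + 1) → PTrans G.Loc),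
      StrictMono pt ∧ 0 ≤ pt 0 ∧ pt (Fin.last k) = r ∧ (∀ i, pt i ∈ points) ∧
      (∀ i : Fin (k + 1),
        (∀ ν : ℝ, prevPt pt i < ν → ν ≤ pt i → strat ⟨(ℓ, ν), []⟩ = (0, δ i)) ∨
        (∀ ν : ℝ, prevPt pt i < ν → ν ≤ pt i → strat ⟨(ℓ, ν), []⟩ = (pt i - ν, δ i))) ∧
      (0 < pt 0 → strat ⟨(ℓ, 0), []⟩ = (pt 0, δ 0))

/-- The size `|σ|` of an FP strategy: the number of intervals generated by its points. -/
def FPStrat.size {G : PTG} {r : ℝ} {P : Owner} (σ : FPStrat G r P) : ℕ := σ.points.card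

/-- Two clock values lie in the same interval of the partition induced by `pts`
(intervals being half-open to the left). -/
def SameInterval (pts : Finset ℝ) (ν ν' : ℝ) : Prop := ∀ p ∈ pts, (ν ≤ p ↔ ν' ≤ p)

/-- A negative cycle (NC) strategy of Min: an FP strategy such that along every consistent
finite play which starts and ends in the same location, with both clock values in the same
interval of the strategy, the sum of the prices of the discrete transitions is at most −1. -/
def FPStrat.IsNC {G : PTG} {r : ℝ} (σ : FPStrat G r Owner.min) : Prop :=
  ∀ h : Hist G.Loc, G.HistValid h → G.Consistent Owner.min σ.strat h →
    h.steps ≠ [] → h.last.1 = h.start.1 → SameInterval σ.points h.start.2 h.last.2 →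
    h.discSum ≤ -1

/-- A fake-optimal Min strategy: its fake value equals the value of the game everywhere. -/
def FPStrat.FakeOpt {G : PTG} {r : ℝ} (σ : FPStrat G r Owner.min) : Prop :=
  ∀ (ℓ : G.Loc) (ν : ℝ), 0 ≤ ν → ν ≤ r → G.fakeVal σ.strat (ℓ, ν) = G.val (ℓ, ν)

/-- An optimal Max FP strategy: its value equals the value of the game everywhere. -/
def FPStrat.Opt {G : PTG} {r : ℝ} (τ : FPStrat G r Owner.max) : Prop :=
  ∀ (ℓ : G.Loc) (ν : ℝ), 0 ≤ ν → ν ≤ r → G.maxValue τ.strat (ℓ, ν) = G.val (ℓ, ν)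

/-- A cost function on `[0, r]`: either infinite, or continuous piecewise affine with
finitely many cutpoints, all cutpoints and the values at them being rational. -/
def IsCostFunctionOn (r : ℝ) (f : ℝ → EReal) : Prop :=
  (∀ ν : ℝ, 0 ≤ ν → ν ≤ r → f ν = ⊤) ∨
  (∀ ν : ℝ, 0 ≤ ν → ν ≤ r → f ν = ⊥) ∨
  ∃ (n : ℕ) (a : Fin (n + 1) → ℚ),
    Monotone a ∧ ((a 0 : ℝ) = 0) ∧ ((a (Fin.last n) : ℝ) = r) ∧
    (∀ i, ∃ q : ℚ, f ((a i : ℚ) : ℝ) = ((q : ℝ) : EReal)) ∧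
    ∀ i : Fin n, ∃ α β : ℝ, ∀ ν : ℝ, ((a i.castSucc : ℚ) : ℝ) ≤ ν → ν ≤ ((a i.succ : ℚ) : ℝ) →
      f ν = ((α * ν + β : ℝ) : EReal)

/-- An `r`-SPTG is finitely optimal if Min has a fake-optimal NC strategy, Max has an optimal
FP strategy, and the value function of every location is a cost function. -/
def PTG.FinitelyOptimal (G : PTG) (r : ℝ) : Prop :=
  (∃ σ : FPStrat G r Owner.min, σ.IsNC ∧ σ.FakeOpt) ∧
  (∃ τ : FPStrat G r Owner.max, τ.Opt) ∧
  ∀ ℓ : G.Loc, IsCostFunctionOn r fun ν => G.val (ℓ, ν)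

/-- The finite set `F_G` of affine functions `k + φ_ℓ`, for `ℓ` final and
`k ∈ [−(|L|−1)·P_T, |L|·P_T] ∩ ℤ`. -/
def PTG.FF (G : PTG) : Set (ℝ → ℝ) :=
  {f | ∃ (ℓ : G.Loc) (k : ℤ), G.owner ℓ = Owner.final ∧
    -(((G.nLoc : ℤ) - 1) * (G.PT : ℤ)) ≤ k ∧ k ≤ (G.nLoc : ℤ) * (G.PT : ℤ) ∧
    f = fun ν => (k : ℝ) + G.fcost ℓ ν}

noncomputable def PTG.FFcard (G : PTG) : ℕ := G.FF.ncard

/-- The set of possible cutpoints: intersection points of two distinct functions of `F_G`. -/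
def PTG.posscp (G : PTG) (r : ℝ) : Set ℝ :=
  {ν | 0 ≤ ν ∧ ν ≤ r ∧ ∃ f₁ ∈ G.FF, ∃ f₂ ∈ G.FF, f₁ ≠ f₂ ∧ f₁ ν = f₂ ν}

/-- The construction `Wait(G, r, x)`: all guards are restricted to `[0, r]` and, for every
non-urgent location `ℓ`, a clone final location `ℓ^f` is added, with final cost function
`ν ↦ (r − ν)·π(ℓ) + x_ℓ`, together with a price-0 transition `(ℓ, ℓ^f)`.
(Clone locations are created for all locations; those of urgent or final locations are
unreachable since no transition leads to them.) -/
noncomputable def PTG.wait (G : PTG) (r : ℝ) (x : G.Loc → ℝ) : PTG where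
  Loc := G.Loc ⊕ G.Loc
  locFin := inferInstance
  locDec := inferInstance
  owner := Sum.elim G.owner fun _ => Owner.final
  urgent := Sum.elim G.urgent fun _ => false
  M := G.M
  trans :=
    (G.trans.image fun δ =>
      { src := Sum.inl δ.src, lo := max δ.lo 0, hi := min δ.hi r,
        loOpen := δ.loOpen, hiOpen := δ.hiOpen, reset := δ.reset,
        price := δ.price, tgt := Sum.inl δ.tgt }) ∪
    ((Finset.univ.filter fun ℓ : G.Loc =>
        G.owner ℓ ≠ Owner.final ∧ G.urgent ℓ = false).image
      fun ℓ => { src := Sum.inl ℓ, lo := 0, hi := r, loOpen := false, hiOpen := false,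
                 reset := false, price := 0, tgt := Sum.inr ℓ })
  price := Sum.elim G.price fun _ => 0
  fcost := Sum.elim G.fcost fun ℓ ν => (r - ν) * (G.price ℓ : ℝ) + x ℓ

/-- `G_r = Wait(G, r, (Val_G(ℓ, r))_ℓ)`. -/
noncomputable def PTG.Gr (G : PTG) (r : ℝ) : PTG :=
  G.wait r fun ℓ => (G.val (ℓ, r)).toReal

/-- Making the locations indicated by `S` urgent. -/
def PTG.makeUrgent (G : PTG) (S : G.Loc → Bool) : PTG :=
  { G with urgent := fun ℓ => G.urgent ℓ || S ℓ }

/-- `G_{L', r}`: the game `G_r` in which all locations of `L'` are made urgent. -/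
noncomputable def PTG.GLr (G : PTG) (S : G.Loc → Bool) (r : ℝ) : PTG :=
  (G.Gr r).makeUrgent (Sum.elim S fun _ => false)

/-- The operator `Next_{L'}(r)`: the supremum of the `r' ≤ r` such that the value functions
of `G_{L',r}` and of `G` coincide on `[r', r]`. -/
noncomputable def PTG.Next (G : PTG) (S : G.Loc → Bool) (r : ℝ) : ℝ :=
  sSup {r' : ℝ | 0 ≤ r' ∧ r' ≤ r ∧ ∀ (ℓ : G.Loc) (ν : ℝ), r' ≤ ν → ν ≤ r →
    (G.GLr S r).val (Sum.inl ℓ, ν) = G.val (ℓ, ν)}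

/-- Turning additionally location `ℓ` urgent: `L' ∪ {ℓ}` as a Boolean predicate. -/
def addLoc (G : PTG) (S : G.Loc → Bool) (ℓ : G.Loc) : G.Loc → Bool :=
  fun ℓ' => S ℓ' || decide (ℓ' = ℓ)

/-- The singleton `{ℓ}` as a Boolean predicate. -/
def singLoc (G : PTG) (ℓ : G.Loc) : G.Loc → Bool := fun ℓ' => decide (ℓ' = ℓ)

/-- `f` is, on `[0, r]`, piecewise affine with at most `N` cutpoints. -/
def PWAffineOn (r : ℝ) (f : ℝ → EReal) (N : ℕ) : Prop :=
  ∃ n : ℕ, n ≤ N ∧ ∃ a : Fin (n + 2) → ℝ,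
    Monotone a ∧ a 0 = 0 ∧ a (Fin.last (n + 1)) = r ∧
    ∀ i : Fin (n + 1), ∃ α β : ℝ, ∀ ν : ℝ, a i.castSucc ≤ ν → ν ≤ a i.succ →
      f ν = ((α * ν + β : ℝ) : EReal)

/-- `f` has a cutpoint in `[a, b)`: some point of `[a, b)` has no neighbourhood
(within `[0,1]`) on which `f` is affine. -/
def HasCutpointIn (f : ℝ → EReal) (a b : ℝ) : Prop :=
  ∃ x : ℝ, a ≤ x ∧ x < b ∧ ∀ ε : ℝ, 0 < ε →
    ¬ ∃ α β : ℝ, ∀ ν : ℝ, max 0 (x - ε) ≤ ν → ν ≤ min 1 (x + ε) →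
      f ν = ((α * ν + β : ℝ) : EReal)

/-- The endpoints of the guards of `G`, together with `0`. -/
noncomputable def PTG.endpoints (G : PTG) : Finset ℝ :=
  insert 0 ((G.trans.image PTrans.lo) ∪ (G.trans.image PTrans.hi))

/-- `s` is a region of `G`: a singleton of an endpoint, or an open interval between two
consecutive endpoints. -/
def PTG.IsRegion (G : PTG) (s : Set ℝ) : Prop :=
  (∃ e ∈ G.endpoints, s = {e}) ∨
  ∃ e ∈ G.endpoints, ∃ e' ∈ G.endpoints, e < e' ∧
    (∀ p ∈ G.endpoints, p ≤ e ∨ e' ≤ p) ∧ s = Set.Ioo e e'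

/-- No cycle of the configuration graph of `G` traverses a resetting transition. -/
def PTG.ResetAcyclic (G : PTG) : Prop :=
  ¬ ∃ h : Hist G.Loc, G.HistValid h ∧ h.steps ≠ [] ∧ h.last = h.start ∧
      ∃ st ∈ h.steps, st.2.1.reset = true

/-- An `ε`-optimal strategy of Min. -/
def PTG.MinEpsOpt (G : PTG) (σ : StratFun G.Loc) (ε : ℝ) : Prop :=
  G.MinValid σ ∧ ∀ (ℓ : G.Loc) (ν : ℝ), 0 ≤ ν → ν ≤ (G.M : ℝ) →
    G.minValue σ (ℓ, ν) ≤ G.val (ℓ, ν) + (ε : EReal)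

/-- An `ε`-optimal strategy of Max. -/
def PTG.MaxEpsOpt (G : PTG) (τ : StratFun G.Loc) (ε : ℝ) : Prop :=
  G.MaxValid τ ∧ ∀ (ℓ : G.Loc) (ν : ℝ), 0 ≤ ν → ν ≤ (G.M : ℝ) →
    G.val (ℓ, ν) - (ε : EReal) ≤ G.maxValue τ (ℓ, ν)

end PTGPaper
namespace PTGPaper

/-- The set `Z*_ν = {n + φ_ℓ(ν) : n ∈ ℤ, ℓ ∈ L_f}`. -/
def PTG.Zstar (G : PTG) (ν : ℝ) : Set ℝ :=
  {x | ∃ (n : ℤ) (ℓ : G.Loc), G.owner ℓ = Owner.final ∧ x = (n : ℝ) + G.fcost ℓ ν}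

/-- The set `possval_ν = [−(|L|−1)·P_T − P_f, |L|·P_T + P_f] ∩ Z*_ν`. -/
noncomputable def PTG.possval (G : PTG) (r ν : ℝ) : Set ℝ :=
  {x ∈ G.Zstar ν | -(((G.nLoc : ℝ) - 1) * (G.PT : ℝ)) - G.Pf r ≤ x ∧
    x ≤ (G.nLoc : ℝ) * (G.PT : ℝ) + G.Pf r}


/-! ### Auxiliary development for `urgent_sptg_possval` -/

section AuxDev

open Classical

/-- Case analysis on `EReal`. -/
lemma erealCases (x : EReal) : x = ⊥ ∨ x = ⊤ ∨ ∃ v : ℝ, x = (v : EReal) := by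
  induction x using EReal.rec with
  | bot => exact Or.inl rfl
  | coe v => exact Or.inr (Or.inr ⟨v, rfl⟩)
  | top => exact Or.inr (Or.inl rfl)

lemma ereal_add_coe_cancel (c : ℝ) (x : EReal) :
    ((c : EReal) + x) + ((-c : ℝ) : EReal) = x := by
  rcases erealCases x with h | h | ⟨v, h⟩ <;> subst h
  · rfl
  · rfl
  · rw [← EReal.coe_add, ← EReal.coe_add, EReal.coe_eq_coe_iff]; ring

lemma ereal_coe_add_cancel_left {c : ℝ} {x y : EReal}
    (h : (c : EReal) + x = (c : EReal) + y) : x = y := by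
  have h2 := congrArg (fun z => z + ((-c : ℝ) : EReal)) h
  simp only [ereal_add_coe_cancel] at h2
  exact h2

lemma ereal_coe_add_eq_coe {c v : ℝ} {x : EReal}
    (h : (c : EReal) + x = (v : EReal)) : x = ((v - c : ℝ) : EReal) := by
  have : (c : EReal) + x = (c : EReal) + ((v - c : ℝ) : EReal) := by
    rw [h, ← EReal.coe_add, EReal.coe_eq_coe_iff]; ring
  exact ereal_coe_add_cancel_left this

lemma ereal_add_eq_bot_iff {c : ℝ} {x : EReal} : (c : EReal) + x = ⊥ ↔ x = ⊥ := by
  rcases erealCases x with h | h | ⟨v, h⟩ <;> subst h <;>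
    simp [← EReal.coe_add]

/-- `⨅ n, (c + f n) ≤ c + ⨅ n, f n` for a real constant `c`. -/
lemma iInf_coe_add_le (c : ℝ) (f : ℕ → EReal) :
    (⨅ n, ((c : EReal) + f n)) ≤ (c : EReal) + ⨅ n, f n := by
  rcases erealCases (⨅ n, f n) with hI | hI | ⟨v, hI⟩
  · rw [hI]
    have hb : (c : EReal) + (⊥ : EReal) = ⊥ := rfl
    rw [hb, le_bot_iff]
    by_contra hne
    have hlow : ∀ n, (⨅ m, ((c : EReal) + f m)) + ((-c : ℝ) : EReal) ≤ f n := by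
      intro n
      have h1 : (⨅ m, ((c : EReal) + f m)) ≤ (c : EReal) + f n := iInf_le _ n
      calc (⨅ m, ((c : EReal) + f m)) + ((-c : ℝ) : EReal)
          ≤ ((c : EReal) + f n) + ((-c : ℝ) : EReal) := add_le_add_left h1 _
        _ = f n := ereal_add_coe_cancel c (f n)
    have hB : (⨅ m, ((c : EReal) + f m)) + ((-c : ℝ) : EReal) ≤ ⊥ := by
      rw [← hI]; exact le_iInf hlow
    rw [le_bot_iff] at hB
    rcases erealCases (⨅ m, ((c : EReal) + f m)) with h' | h' | ⟨w, h'⟩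
    · exact hne h'
    · rw [h'] at hB
      exact (by simp : ((⊤ : EReal) + ((-c : ℝ) : EReal) ≠ ⊥)) hB
    · rw [h', ← EReal.coe_add] at hB
      exact (EReal.coe_ne_bot _) hB
  · have hall : ∀ n, f n = ⊤ := iInf_eq_top.1 hI
    rw [hI]
    have h2 : ∀ n, (c : EReal) + f n = ⊤ := fun n => by rw [hall n]; rfl
    simp only [h2, iInf_const]
    exact le_top
  · rw [hI, ← EReal.coe_add]
    have key : ∀ ε : ℝ, 0 < ε → (⨅ n, ((c : EReal) + f n)) ≤ ((c + v + ε : ℝ) : EReal) := by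
      intro ε hε
      have hlt : (⨅ n, f n) < ((v + ε : ℝ) : EReal) := by
        rw [hI, EReal.coe_lt_coe_iff]; linarith
      obtain ⟨n, hn⟩ := iInf_lt_iff.1 hlt
      have h2 : (c : EReal) + f n ≤ ((c + v + ε : ℝ) : EReal) := by
        rcases erealCases (f n) with h | h | ⟨u, h⟩
        · rw [h]
          have : (c : EReal) + (⊥ : EReal) = ⊥ := rfl
          rw [this]; exact bot_le
        · rw [h] at hn; exact absurd hn (by simp)
        · rw [h] at hn ⊢
          rw [← EReal.coe_add, EReal.coe_le_coe_iff]
          rw [EReal.coe_lt_coe_iff] at hn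
          linarith
      exact (iInf_le _ n).trans h2
    rcases erealCases (⨅ n, ((c : EReal) + f n)) with h' | h' | ⟨w, h'⟩
    · rw [h']; exact bot_le
    · exfalso
      have h1 := key 1 one_pos
      rw [h'] at h1
      exact EReal.coe_ne_top _ (top_le_iff.1 h1)
    · rw [h', EReal.coe_le_coe_iff]
      have hw : ∀ ε : ℝ, 0 < ε → w ≤ c + v + ε := by
        intro ε hε
        have h2 := key ε hε
        rw [h', EReal.coe_le_coe_iff] at h2
        exact h2
      exact le_of_forall_pos_le_add (by intro ε hε; linarith [hw ε hε])

end AuxDev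


section GameDev

open Classical

variable {G : PTG}

/-- Transitions leaving `ℓ`. -/
def Tl (G : PTG) (ℓ : G.Loc) : Finset (PTrans G.Loc) :=
  G.trans.filter (fun δ => δ.src = ℓ)

lemma mem_Tl {ℓ : G.Loc} {δ : PTrans G.Loc} :
    δ ∈ Tl G ℓ ↔ δ ∈ G.trans ∧ δ.src = ℓ := by
  simp [Tl]

/-- Value iteration. -/
noncomputable def Vit (G : PTG) (ν : ℝ) : ℕ → G.Loc → EReal
  | 0 => fun ℓ => if G.owner ℓ = Owner.final then ((G.fcost ℓ ν : ℝ) : EReal) else ⊤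
  | (n+1) => fun ℓ =>
      if G.owner ℓ = Owner.final then ((G.fcost ℓ ν : ℝ) : EReal)
      else if G.owner ℓ = Owner.min then
        (Tl G ℓ).inf (fun δ => ((δ.price : ℝ) : EReal) + Vit G ν n δ.tgt)
      else (Tl G ℓ).sup (fun δ => ((δ.price : ℝ) : EReal) + Vit G ν n δ.tgt)

/-- The limit of value iteration. -/
noncomputable def Vom (G : PTG) (ν : ℝ) (ℓ : G.Loc) : EReal := ⨅ n, Vit G ν n ℓ

lemma Vit_final {ν : ℝ} {ℓ : G.Loc} (hf : G.owner ℓ = Owner.final) (n : ℕ) :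
    Vit G ν n ℓ = ((G.fcost ℓ ν : ℝ) : EReal) := by
  cases n <;> simp [Vit, hf]

lemma Vom_final {ν : ℝ} {ℓ : G.Loc} (hf : G.owner ℓ = Owner.final) :
    Vom G ν ℓ = ((G.fcost ℓ ν : ℝ) : EReal) := by
  simp [Vom, Vit_final hf]

lemma Vit_succ_min {ν : ℝ} {ℓ : G.Loc} (hf : G.owner ℓ ≠ Owner.final)
    (hm : G.owner ℓ = Owner.min) (n : ℕ) :
    Vit G ν (n+1) ℓ = (Tl G ℓ).inf (fun δ => ((δ.price : ℝ) : EReal) + Vit G ν n δ.tgt) := by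
  simp [Vit, hf, hm]

lemma Vit_succ_max {ν : ℝ} {ℓ : G.Loc} (hf : G.owner ℓ ≠ Owner.final)
    (hm : G.owner ℓ ≠ Owner.min) (n : ℕ) :
    Vit G ν (n+1) ℓ = (Tl G ℓ).sup (fun δ => ((δ.price : ℝ) : EReal) + Vit G ν n δ.tgt) := by
  simp [Vit, hf, hm]

lemma Vit_zero_nonfinal {ν : ℝ} {ℓ : G.Loc} (hf : G.owner ℓ ≠ Owner.final) :
    Vit G ν 0 ℓ = ⊤ := by simp [Vit, hf]

lemma Vit_succ_le {ν : ℝ} : ∀ n (ℓ : G.Loc), Vit G ν (n+1) ℓ ≤ Vit G ν n ℓ := by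
  intro n
  induction n with
  | zero =>
    intro ℓ
    by_cases hf : G.owner ℓ = Owner.final
    · rw [Vit_final hf, Vit_final hf]
    · rw [Vit_zero_nonfinal hf]; exact le_top
  | succ n ih =>
    intro ℓ
    by_cases hf : G.owner ℓ = Owner.final
    · rw [Vit_final hf, Vit_final hf]
    by_cases hm : G.owner ℓ = Owner.min
    · rw [Vit_succ_min hf hm, Vit_succ_min hf hm]
      exact Finset.inf_mono_fun fun δ _ => add_le_add_right (ih δ.tgt) _
    · rw [Vit_succ_max hf hm, Vit_succ_max hf hm]
      exact Finset.sup_mono_fun fun δ _ => add_le_add_right (ih δ.tgt) _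

lemma Vit_anti {ν : ℝ} (ℓ : G.Loc) : Antitone (fun n => Vit G ν n ℓ) :=
  antitone_nat_of_succ_le (fun n => Vit_succ_le n ℓ)

lemma Vom_le_Vit {ν : ℝ} (n : ℕ) (ℓ : G.Loc) : Vom G ν ℓ ≤ Vit G ν n ℓ := iInf_le _ n


lemma lastFrom_append {L : Type} (s : L × ℝ) (l : List (ℝ × PTrans L × (L × ℝ)))
    (x : ℝ × PTrans L × (L × ℝ)) :
    Hist.lastFrom s (l ++ [x]) = x.2.2 := by
  induction l generalizing s with
  | nil => obtain ⟨t, δ, s'⟩ := x; rfl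
  | cons a t ih => obtain ⟨t0, δ0, s0⟩ := a; exact ih s0

lemma validFrom_append (s : G.Config) (l : List (ℝ × PTrans G.Loc × G.Config))
    (x : ℝ × PTrans G.Loc × G.Config) :
    G.ValidFrom s (l ++ [x]) ↔
      G.ValidFrom s l ∧ ∃ c, G.Move (Hist.lastFrom s l) x.2.2 x.1 x.2.1 c := by
  induction l generalizing s with
  | nil =>
    obtain ⟨t, δ, s'⟩ := x
    simp [PTG.ValidFrom, Hist.lastFrom]
  | cons a t ih =>
    obtain ⟨t0, δ0, s0⟩ := a
    simp only [List.cons_append, PTG.ValidFrom, Hist.lastFrom, List.append_eq, ih, and_assoc]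

section Struct

variable (hwf : G.WF) {r : ℚ} (hsptg : G.IsSPTG (r : ℝ))
    (hurg : ∀ ℓ : G.Loc, G.owner ℓ ≠ Owner.final → G.urgent ℓ = true)

include hwf hsptg hurg

/-- In an all-urgent SPTG, every move has delay `0`, no reset, and leaves a
non-final location. -/
lemma move_facts {s s' : G.Config} {t : ℝ} {δ : PTrans G.Loc} {c : ℝ}
    (mv : G.Move s s' t δ c) :
    t = 0 ∧ s'.2 = s.2 ∧ s'.1 = δ.tgt ∧ δ ∈ Tl G s.1 ∧ G.owner s.1 ≠ Owner.final := by
  obtain ⟨hmem, hsrc, _, hurgt, _, htgt, hclk, _⟩ := mv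
  have hnf : G.owner s.1 ≠ Owner.final := by
    rw [← hsrc]; exact hwf.1 δ hmem
  have ht : t = 0 := hurgt (hurg _ hnf)
  have hres : δ.reset = false := (hsptg.2.2 δ hmem).2.2.2.2
  refine ⟨ht, ?_, htgt, mem_Tl.2 ⟨hmem, hsrc⟩, hnf⟩
  rw [hclk, hres, ht]
  simp

lemma validFrom_clock {s : G.Config} :
    ∀ {l : List (ℝ × PTrans G.Loc × G.Config)}, G.ValidFrom s l →
      (Hist.lastFrom s l).2 = s.2 := by
  intro l
  induction l generalizing s with
  | nil => intro _; rfl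
  | cons a t ih =>
    obtain ⟨t0, δ0, s0⟩ := a
    rintro ⟨⟨c, mv⟩, hrest⟩
    have hf := move_facts hwf hsptg hurg mv
    have := ih hrest
    simp only [Hist.lastFrom] at this ⊢
    rw [this, hf.2.1]

lemma validFrom_cost {s : G.Config} :
    ∀ {l : List (ℝ × PTrans G.Loc × G.Config)}, G.ValidFrom s l →
      Hist.costFrom G.price s l = (((l.map fun st => st.2.1.price).sum : ℤ) : ℝ) := by
  intro l
  induction l generalizing s with
  | nil => intro _; simp [Hist.costFrom]
  | cons a t ih =>
    obtain ⟨t0, δ0, s0⟩ := a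
    rintro ⟨⟨c, mv⟩, hrest⟩
    have hf := move_facts hwf hsptg hurg mv
    simp only [Hist.costFrom, List.map_cons, List.sum_cons, ih hrest, hf.1]
    push_cast
    ring

lemma histValid_last_clock {h : Hist G.Loc} (hv : G.HistValid h) :
    h.last.2 = h.start.2 :=
  validFrom_clock hwf hsptg hurg hv.2.2

lemma accCost_eq_discSum {h : Hist G.Loc} (hv : G.HistValid h) :
    G.accCost h = ((h.discSum : ℤ) : ℝ) :=
  validFrom_cost hwf hsptg hurg hv.2.2

omit hurg in
/-- `M = r` as soon as there is a non-final location. -/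
lemma M_eq_r {ℓ : G.Loc} (hnf : G.owner ℓ ≠ Owner.final) : ((G.M : ℝ)) = (r : ℝ) := by
  obtain ⟨s', t, δ, c, mv⟩ :=
    hwf.2.2.2.2 ℓ (G.M : ℝ) hnf (Nat.cast_nonneg _) le_rfl
  obtain ⟨hmem, _, ht0, _, hg, _⟩ := mv
  obtain ⟨hlo, hhi, hloo, hhio, _⟩ := hsptg.2.2 δ hmem
  have h1 : (G.M : ℝ) ≤ (r : ℝ) := by
    have := hg.2
    rw [hhio] at this
    simp only [Bool.false_eq_true, if_false] at this
    rw [hhi] at this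
    linarith
  have h2 : (r : ℝ) ≤ (G.M : ℝ) := by
    have := (hwf.2.1 δ hmem).2
    rwa [hhi] at this
  linarith

omit hsptg hurg in
lemma Tl_nonempty {ℓ : G.Loc} (hnf : G.owner ℓ ≠ Owner.final) : (Tl G ℓ).Nonempty := by
  obtain ⟨s', t, δ, c, mv⟩ := hwf.2.2.2.2 ℓ 0 hnf le_rfl (Nat.cast_nonneg _)
  exact ⟨δ, mem_Tl.2 ⟨mv.1, mv.2.1⟩⟩

/-- Zero-delay move along a transition of `Tl`. -/
lemma mkMove {h : Hist G.Loc} (hv : G.HistValid h) {δ : PTrans G.Loc}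
    (hδ : δ ∈ Tl G h.last.1) :
    G.Move h.last (δ.tgt, h.last.2) 0 δ ((δ.price : ℝ)) := by
  obtain ⟨hmem, hsrc⟩ := mem_Tl.1 hδ
  have hnf : G.owner h.last.1 ≠ Owner.final := by rw [← hsrc]; exact hwf.1 δ hmem
  obtain ⟨hlo, hhi, hloo, hhio, hres⟩ := hsptg.2.2 δ hmem
  have hclk := histValid_last_clock hwf hsptg hurg hv
  have h0 : 0 ≤ h.last.2 := by rw [hclk]; exact hv.1
  have hM : h.last.2 ≤ (G.M : ℝ) := by rw [hclk]; exact hv.2.1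
  have hr : h.last.2 ≤ (r : ℝ) := by rw [← M_eq_r hwf hsptg hnf]; exact hM
  refine ⟨hmem, hsrc, le_rfl, fun _ => rfl, ?_, rfl, ?_, ?_⟩
  · constructor
    · rw [hloo]; simp only [Bool.false_eq_true, if_false]; rw [hlo]; linarith
    · rw [hhio]; simp only [Bool.false_eq_true, if_false]; rw [hhi]; linarith
  · rw [hres]; simp
  · ring

end Struct


section Strats

variable (hwf : G.WF) {r : ℚ} (hsptg : G.IsSPTG (r : ℝ))
    (hurg : ∀ ℓ : G.Loc, G.owner ℓ ≠ Owner.final → G.urgent ℓ = true)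

/-- A default valid strategy. -/
noncomputable def defStrat (G : PTG) (ℓ0 : G.Loc) : StratFun G.Loc := fun h =>
  if hh : ∃ td : ℝ × PTrans G.Loc, ∃ s' c, G.Move h.last s' td.1 td.2 c then hh.choose
  else (0, ⟨ℓ0, 0, 0, false, false, false, 0, ℓ0⟩)

include hwf hsptg hurg

lemma defStrat_spec {h : Hist G.Loc} (hv : G.HistValid h)
    (hnf : G.owner h.last.1 ≠ Owner.final) (ℓ0 : G.Loc) :
    ∃ s' c, G.Move h.last s' (defStrat G ℓ0 h).1 (defStrat G ℓ0 h).2 c := by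
  have hclk := histValid_last_clock hwf hsptg hurg hv
  have h0 : 0 ≤ h.last.2 := by rw [hclk]; exact hv.1
  have hM : h.last.2 ≤ (G.M : ℝ) := by rw [hclk]; exact hv.2.1
  obtain ⟨s', t, δ, c, mv⟩ := hwf.2.2.2.2 h.last.1 h.last.2 hnf h0 hM
  have hh : ∃ td : ℝ × PTrans G.Loc, ∃ s' c, G.Move h.last s' td.1 td.2 c := by
    refine ⟨(t, δ), s', c, ?_⟩
    rwa [Prod.mk.eta] at mv
  rw [defStrat, dif_pos hh]
  exact hh.choose_spec

lemma defStrat_valid (ℓ0 : G.Loc) (P : Owner) (hP : P ≠ Owner.final) :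
    G.StratValid P (defStrat G ℓ0) := by
  intro h hv ho
  exact defStrat_spec hwf hsptg hurg hv (by rw [ho]; exact hP) ℓ0

end Strats

section Picks

/-- Pick an element of a finite set attaining the `inf` of `f`. -/
noncomputable def pickInf (s : Finset (PTrans G.Loc)) (f : PTrans G.Loc → EReal)
    (hs : s.Nonempty) : PTrans G.Loc :=
  (Finset.exists_mem_eq_inf s hs f).choose

lemma pickInf_mem (s : Finset (PTrans G.Loc)) (f : PTrans G.Loc → EReal) (hs : s.Nonempty) :
    pickInf s f hs ∈ s := (Finset.exists_mem_eq_inf s hs f).choose_spec.1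

lemma pickInf_eq (s : Finset (PTrans G.Loc)) (f : PTrans G.Loc → EReal) (hs : s.Nonempty) :
    s.inf f = f (pickInf s f hs) := (Finset.exists_mem_eq_inf s hs f).choose_spec.2

/-- Pick an element of a finite set attaining the `sup` of `f`. -/
noncomputable def pickSup (s : Finset (PTrans G.Loc)) (f : PTrans G.Loc → EReal)
    (hs : s.Nonempty) : PTrans G.Loc :=
  (Finset.exists_mem_eq_sup s hs f).choose

lemma pickSup_mem (s : Finset (PTrans G.Loc)) (f : PTrans G.Loc → EReal) (hs : s.Nonempty) :
    pickSup s f hs ∈ s := (Finset.exists_mem_eq_sup s hs f).choose_spec.1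

lemma pickSup_eq (s : Finset (PTrans G.Loc)) (f : PTrans G.Loc → EReal) (hs : s.Nonempty) :
    s.sup f = f (pickSup s f hs) := (Finset.exists_mem_eq_sup s hs f).choose_spec.2

end Picks

section Greedy

/-- The greedy Min strategy with step budget `n`. -/
noncomputable def minGreedy (G : PTG) (ν : ℝ) (ℓ0 : G.Loc) (n : ℕ) : StratFun G.Loc :=
  fun h =>
    if hc : h.steps.length < n ∧ (Tl G h.last.1).Nonempty then
      (0, pickInf (Tl G h.last.1)
        (fun δ => ((δ.price : ℝ) : EReal) + Vit G ν (n - h.steps.length - 1) δ.tgt) hc.2)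
    else defStrat G ℓ0 h

/-- The greedy Max strategy with respect to `Vom`. -/
noncomputable def maxGreedy (G : PTG) (ν : ℝ) (ℓ0 : G.Loc) : StratFun G.Loc :=
  fun h =>
    if hc : (Tl G h.last.1).Nonempty then
      (0, pickSup (Tl G h.last.1)
        (fun δ => ((δ.price : ℝ) : EReal) + Vom G ν δ.tgt) hc)
    else defStrat G ℓ0 h

variable (hwf : G.WF) {r : ℚ} (hsptg : G.IsSPTG (r : ℝ))
    (hurg : ∀ ℓ : G.Loc, G.owner ℓ ≠ Owner.final → G.urgent ℓ = true)

include hwf hsptg hurg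

lemma minGreedy_valid (ν : ℝ) (ℓ0 : G.Loc) (n : ℕ) : G.MinValid (minGreedy G ν ℓ0 n) := by
  intro h hv ho
  have hnf : G.owner h.last.1 ≠ Owner.final := by rw [ho]; simp
  rw [minGreedy]
  split
  · next hc =>
    set δ := pickInf (Tl G h.last.1)
      (fun δ => ((δ.price : ℝ) : EReal) + Vit G ν (n - h.steps.length - 1) δ.tgt) hc.2 with hδ
    have hmem : δ ∈ Tl G h.last.1 := pickInf_mem _ _ _
    exact ⟨(δ.tgt, h.last.2), (δ.price : ℝ), mkMove hwf hsptg hurg hv hmem⟩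
  · exact defStrat_spec hwf hsptg hurg hv hnf ℓ0

lemma maxGreedy_valid (ν : ℝ) (ℓ0 : G.Loc) : G.MaxValid (maxGreedy G ν ℓ0) := by
  intro h hv ho
  have hnf : G.owner h.last.1 ≠ Owner.final := by rw [ho]; simp
  rw [maxGreedy]
  split
  · next hc =>
    have hmem := pickSup_mem (Tl G h.last.1)
      (fun δ => ((δ.price : ℝ) : EReal) + Vom G ν δ.tgt) hc
    exact ⟨_, (_ : ℝ), mkMove hwf hsptg hurg hv hmem⟩
  · exact defStrat_spec hwf hsptg hurg hv hnf ℓ0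

end Greedy

section HistOf

variable (σ τ : StratFun G.Loc) (s₀ : G.Config)

lemma histOf_zero : G.histOf σ τ s₀ 0 = ⟨s₀, []⟩ := rfl

lemma last_nil : (⟨s₀, []⟩ : Hist G.Loc).last = s₀ := rfl

lemma histOf_start : ∀ n, (G.histOf σ τ s₀ n).start = s₀ := by
  intro n
  induction n with
  | zero => rfl
  | succ n ih =>
    by_cases hf : G.owner ((G.histOf σ τ s₀ n).last.1) = Owner.final <;>
      simp [PTG.histOf, hf, ih]

lemma histOf_succ_final {n : ℕ} (hf : G.owner ((G.histOf σ τ s₀ n).last.1) = Owner.final) :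
    G.histOf σ τ s₀ (n+1) = G.histOf σ τ s₀ n := by
  simp [PTG.histOf, hf]

lemma histOf_succ_nf {n : ℕ} (hf : ¬ G.owner ((G.histOf σ τ s₀ n).last.1) = Owner.final) :
    G.histOf σ τ s₀ (n+1) =
      ⟨(G.histOf σ τ s₀ n).start,
        (G.histOf σ τ s₀ n).steps ++
          [((if G.owner ((G.histOf σ τ s₀ n).last.1) = Owner.min then σ (G.histOf σ τ s₀ n)
              else τ (G.histOf σ τ s₀ n)).1,
            (if G.owner ((G.histOf σ τ s₀ n).last.1) = Owner.min then σ (G.histOf σ τ s₀ n)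
              else τ (G.histOf σ τ s₀ n)).2,
            G.nextCfg (G.histOf σ τ s₀ n).last
              (if G.owner ((G.histOf σ τ s₀ n).last.1) = Owner.min then σ (G.histOf σ τ s₀ n)
                else τ (G.histOf σ τ s₀ n)))] ⟩ := by
  simp [PTG.histOf, hf]

lemma last_append (s : G.Config) (l : List (ℝ × PTrans G.Loc × G.Config))
    (x : ℝ × PTrans G.Loc × G.Config) :
    (⟨s, l ++ [x]⟩ : Hist G.Loc).last = x.2.2 := lastFrom_append s l x

lemma histOf_last_succ_nf {n : ℕ}
    (hf : ¬ G.owner ((G.histOf σ τ s₀ n).last.1) = Owner.final) :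
    (G.histOf σ τ s₀ (n+1)).last =
      G.nextCfg (G.histOf σ τ s₀ n).last
        (if G.owner ((G.histOf σ τ s₀ n).last.1) = Owner.min then σ (G.histOf σ τ s₀ n)
          else τ (G.histOf σ τ s₀ n)) := by
  rw [histOf_succ_nf σ τ s₀ hf]
  exact last_append _ _ _

lemma histOf_len {n : ℕ}
    (hnf : ∀ m, m < n → ¬ G.owner ((G.histOf σ τ s₀ m).last.1) = Owner.final) :
    (G.histOf σ τ s₀ n).steps.length = n := by
  induction n with
  | zero => rfl
  | succ n ih =>
    rw [histOf_succ_nf σ τ s₀ (hnf n (Nat.lt_succ_self n))]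
    simp only [List.length_append, List.length_cons, List.length_nil]
    rw [ih (fun m hm => hnf m (hm.trans (Nat.lt_succ_self n)))]

lemma histOf_discSum_succ_nf {n : ℕ}
    (hf : ¬ G.owner ((G.histOf σ τ s₀ n).last.1) = Owner.final) :
    (G.histOf σ τ s₀ (n+1)).discSum =
      (G.histOf σ τ s₀ n).discSum +
        (if G.owner ((G.histOf σ τ s₀ n).last.1) = Owner.min then σ (G.histOf σ τ s₀ n)
          else τ (G.histOf σ τ s₀ n)).2.price := by
  rw [histOf_succ_nf σ τ s₀ hf]
  simp [Hist.discSum]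

variable (hwf : G.WF) {r : ℚ} (hsptg : G.IsSPTG (r : ℝ))
    (hurg : ∀ ℓ : G.Loc, G.owner ℓ ≠ Owner.final → G.urgent ℓ = true)

include hwf hsptg hurg

lemma histOf_valid (hσ : G.MinValid σ) (hτ : G.MaxValid τ)
    (hs0 : 0 ≤ s₀.2) (hs1 : s₀.2 ≤ (G.M : ℝ)) :
    ∀ n, G.HistValid (G.histOf σ τ s₀ n) := by
  intro n
  induction n with
  | zero => exact ⟨hs0, hs1, trivial⟩
  | succ n ih =>
    by_cases hf : G.owner ((G.histOf σ τ s₀ n).last.1) = Owner.final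
    · rw [histOf_succ_final σ τ s₀ hf]; exact ih
    · rw [histOf_succ_nf σ τ s₀ hf]
      have hstart := histOf_start σ τ s₀ n
      have hmv : ∃ c, G.Move (G.histOf σ τ s₀ n).last
          (G.nextCfg (G.histOf σ τ s₀ n).last
            (if G.owner ((G.histOf σ τ s₀ n).last.1) = Owner.min then σ (G.histOf σ τ s₀ n)
              else τ (G.histOf σ τ s₀ n)))
          (if G.owner ((G.histOf σ τ s₀ n).last.1) = Owner.min then σ (G.histOf σ τ s₀ n)
              else τ (G.histOf σ τ s₀ n)).1
          (if G.owner ((G.histOf σ τ s₀ n).last.1) = Owner.min then σ (G.histOf σ τ s₀ n)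
              else τ (G.histOf σ τ s₀ n)).2 c := by
        by_cases hm : G.owner ((G.histOf σ τ s₀ n).last.1) = Owner.min
        · obtain ⟨s', c, mv⟩ := hσ (G.histOf σ τ s₀ n) ih hm
          rw [if_pos hm]
          refine ⟨c, ?_⟩
          have hs' : s' = G.nextCfg (G.histOf σ τ s₀ n).last (σ (G.histOf σ τ s₀ n)) := by
            obtain ⟨_, _, _, _, _, h1, h2, _⟩ := mv
            exact Prod.ext h1 h2
          rwa [hs'] at mv
        · have hmax : G.owner ((G.histOf σ τ s₀ n).last.1) = Owner.max := by
            cases ho : G.owner ((G.histOf σ τ s₀ n).last.1) <;> simp_all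
          obtain ⟨s', c, mv⟩ := hτ (G.histOf σ τ s₀ n) ih hmax
          rw [if_neg hm]
          refine ⟨c, ?_⟩
          have hs' : s' = G.nextCfg (G.histOf σ τ s₀ n).last (τ (G.histOf σ τ s₀ n)) := by
            obtain ⟨_, _, _, _, _, h1, h2, _⟩ := mv
            exact Prod.ext h1 h2
          rwa [hs'] at mv
      refine ⟨by rw [hstart]; exact hs0, by rw [hstart]; exact hs1, ?_⟩
      rw [validFrom_append]
      exact ⟨ih.2.2, by simpa [Hist.last, histOf_start σ τ s₀ n] using hmv⟩

lemma histOf_clock (hσ : G.MinValid σ) (hτ : G.MaxValid τ)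
    (hs0 : 0 ≤ s₀.2) (hs1 : s₀.2 ≤ (G.M : ℝ)) (n : ℕ) :
    (G.histOf σ τ s₀ n).last.2 = s₀.2 := by
  have := histValid_last_clock hwf hsptg hurg (histOf_valid σ τ s₀ hwf hsptg hurg hσ hτ hs0 hs1 n)
  rwa [histOf_start σ τ s₀ n] at this

end HistOf

section VomFix

lemma finset_uniform {α : Type} (s : Finset α) (P : α → ℕ → Prop)
    (hmono : ∀ a n m, n ≤ m → P a n → P a m) :
    (∀ a ∈ s, ∃ n, P a n) → ∃ N, ∀ a ∈ s, P a N := by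
  classical
  induction s using Finset.induction_on with
  | empty => intro _; exact ⟨0, by simp⟩
  | insert _ _ ha ih =>
    intro h
    next a s =>
      obtain ⟨N, hN⟩ := ih (fun b hb => h b (Finset.mem_insert_of_mem hb))
      obtain ⟨n, hn⟩ := h a (Finset.mem_insert_self a s)
      refine ⟨max n N, fun b hb => ?_⟩
      rcases Finset.mem_insert.1 hb with rfl | hb
      · exact hmono _ _ _ (le_max_left _ _) hn
      · exact hmono _ _ _ (le_max_right _ _) (hN b hb)

lemma iInf_finsetSup_le {α : Type} (s : Finset α) (g : α → ℕ → EReal)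
    (hg : ∀ a, Antitone (g a)) :
    (⨅ n, s.sup (fun a => g a n)) ≤ s.sup (fun a => ⨅ n, g a n) := by
  by_contra hlt
  push_neg at hlt
  obtain ⟨y, hy1, hy2⟩ := exists_between hlt
  have hex : ∀ a ∈ s, ∃ n, g a n < y := by
    intro a ha
    have h1 : (⨅ n, g a n) < y :=
      lt_of_le_of_lt (Finset.le_sup (f := fun a => ⨅ n, g a n) ha) hy1
    exact iInf_lt_iff.1 h1
  obtain ⟨N, hN⟩ := finset_uniform s (fun a n => g a n < y)
    (fun a n m hnm h => lt_of_le_of_lt (hg a hnm) h) hex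
  have h2 : (⨅ n, s.sup fun a => g a n) ≤ y :=
    (iInf_le _ N).trans (Finset.sup_le fun a ha => (hN a ha).le)
  exact absurd hy2 (not_lt.2 h2)

variable {ν : ℝ}

lemma Vom_le_step_min {ℓ : G.Loc} (hnf : G.owner ℓ ≠ Owner.final)
    (hm : G.owner ℓ = Owner.min) {δ : PTrans G.Loc} (hδ : δ ∈ Tl G ℓ) :
    Vom G ν ℓ ≤ ((δ.price : ℝ) : EReal) + Vom G ν δ.tgt := by
  have h1 : ∀ n, Vom G ν ℓ ≤ ((δ.price : ℝ) : EReal) + Vit G ν n δ.tgt := by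
    intro n
    calc Vom G ν ℓ ≤ Vit G ν (n+1) ℓ := Vom_le_Vit _ _
      _ = (Tl G ℓ).inf (fun δ => ((δ.price : ℝ) : EReal) + Vit G ν n δ.tgt) :=
        Vit_succ_min hnf hm n
      _ ≤ _ := Finset.inf_le hδ
  calc Vom G ν ℓ ≤ ⨅ n, (((δ.price : ℝ) : EReal) + Vit G ν n δ.tgt) := le_iInf h1
    _ ≤ _ := iInf_coe_add_le _ _

lemma Vom_le_sup_max {ℓ : G.Loc} (hnf : G.owner ℓ ≠ Owner.final)
    (hm : G.owner ℓ ≠ Owner.min) :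
    Vom G ν ℓ ≤ (Tl G ℓ).sup (fun δ => ((δ.price : ℝ) : EReal) + Vom G ν δ.tgt) := by
  have h1 : Vom G ν ℓ ≤
      ⨅ n, (Tl G ℓ).sup (fun δ => ((δ.price : ℝ) : EReal) + Vit G ν n δ.tgt) := by
    refine le_iInf fun n => ?_
    calc Vom G ν ℓ ≤ Vit G ν (n+1) ℓ := Vom_le_Vit _ _
      _ = _ := Vit_succ_max hnf hm n
  refine h1.trans ?_
  refine (iInf_finsetSup_le (Tl G ℓ)
    (fun δ n => ((δ.price : ℝ) : EReal) + Vit G ν n δ.tgt)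
    (fun δ n m hnm => add_le_add_right (Vit_anti δ.tgt hnm) _)).trans ?_
  exact Finset.sup_mono_fun fun δ _ => iInf_coe_add_le _ _

lemma sup_le_Vom_max {ℓ : G.Loc} (hnf : G.owner ℓ ≠ Owner.final)
    (hm : G.owner ℓ ≠ Owner.min) :
    (Tl G ℓ).sup (fun δ => ((δ.price : ℝ) : EReal) + Vom G ν δ.tgt) ≤ Vom G ν ℓ := by
  refine Finset.sup_le fun δ hδ => le_iInf fun n => ?_
  cases n with
  | zero => rw [Vit_zero_nonfinal hnf]; exact le_top
  | succ n =>
    rw [Vit_succ_max hnf hm n]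
    exact le_trans (add_le_add_right (Vom_le_Vit n δ.tgt) _)
      (Finset.le_sup (f := fun δ => ((δ.price : ℝ) : EReal) + Vit G ν n δ.tgt) hδ)

end VomFix

section PlayBounds

variable (hwf : G.WF) {r : ℚ} (hsptg : G.IsSPTG (r : ℝ))
    (hurg : ∀ ℓ : G.Loc, G.owner ℓ ≠ Owner.final → G.urgent ℓ = true)
    {ν : ℝ}

include hwf hsptg hurg

lemma playCost_minGreedy_le (h0 : 0 ≤ ν) (hM : ν ≤ (G.M : ℝ)) (ℓ0 : G.Loc) (n : ℕ)
    {τ : StratFun G.Loc} (hτ : G.MaxValid τ) :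
    G.playCost (minGreedy G ν ℓ0 n) τ (ℓ0, ν) ≤ Vit G ν n ℓ0 := by
  set σ : StratFun G.Loc := minGreedy G ν ℓ0 n with hσdef
  have hσ : G.MinValid σ := minGreedy_valid hwf hsptg hurg ν ℓ0 n
  set s₀ : G.Config := (ℓ0, ν) with hs₀def
  have hvalid : ∀ m, G.HistValid (G.histOf σ τ s₀ m) :=
    histOf_valid σ τ s₀ hwf hsptg hurg hσ hτ h0 hM
  by_cases hT : Vit G ν n ℓ0 = ⊤
  · rw [hT]; exact le_top
  have inv : ∀ s, s ≤ n →
      (∀ m, m < s → ¬ G.owner ((G.histOf σ τ s₀ m).last.1) = Owner.final) →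
      ((((G.histOf σ τ s₀ s).discSum : ℝ)) : EReal) +
        Vit G ν (n - s) ((G.histOf σ τ s₀ s).last.1) ≤ Vit G ν n ℓ0 := by
    intro s
    induction s with
    | zero =>
      intro _ _
      have hh : (G.histOf σ τ s₀ 0) = ⟨s₀, []⟩ := rfl
      rw [hh]
      have h1 : (⟨s₀, []⟩ : Hist G.Loc).discSum = 0 := rfl
      have h2 : (⟨s₀, []⟩ : Hist G.Loc).last = s₀ := rfl
      rw [h1, h2, Nat.sub_zero]
      simp
      exact le_rfl
    | succ s ih =>
      intro hs1 hnf
      have hfs : ¬ G.owner ((G.histOf σ τ s₀ s).last.1) = Owner.final :=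
        hnf s (Nat.lt_succ_self s)
      have hsn : s < n := lt_of_lt_of_le (Nat.lt_succ_self s) hs1
      have ihs := ih (le_of_lt hsn) (fun m hm => hnf m (hm.trans (Nat.lt_succ_self s)))
      have hlen : (G.histOf σ τ s₀ s).steps.length = s :=
        histOf_len σ τ s₀ (fun m hm => hnf m (hm.trans (Nat.lt_succ_self s)))
      have hsub : n - s = (n - s - 1) + 1 := by omega
      have hsub2 : n - (s + 1) = n - s - 1 := by omega
      have hdisc := histOf_discSum_succ_nf σ τ s₀ hfs
      have hlast := histOf_last_succ_nf σ τ s₀ hfs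
      by_cases hm : G.owner ((G.histOf σ τ s₀ s).last.1) = Owner.min
      · -- Min moves greedily
        have hne : (Tl G ((G.histOf σ τ s₀ s).last.1)).Nonempty :=
          Tl_nonempty hwf (by rw [hm]; simp)
        have hc : (G.histOf σ τ s₀ s).steps.length < n ∧
            (Tl G ((G.histOf σ τ s₀ s).last.1)).Nonempty := by
          rw [hlen]; exact ⟨hsn, hne⟩
        have hσh : σ (G.histOf σ τ s₀ s) =
            (0, pickInf (Tl G ((G.histOf σ τ s₀ s).last.1))
              (fun δ => ((δ.price : ℝ) : EReal) +
                Vit G ν (n - (G.histOf σ τ s₀ s).steps.length - 1) δ.tgt) hne) := by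
          show minGreedy G ν ℓ0 n (G.histOf σ τ s₀ s) = _
          simp only [minGreedy]
          rw [dif_pos hc]
        rw [hlen] at hσh
        set δs := pickInf (Tl G ((G.histOf σ τ s₀ s).last.1))
              (fun δ => ((δ.price : ℝ) : EReal) + Vit G ν (n - s - 1) δ.tgt)
              hne with hδdef
        have hδmem : δs ∈ Tl G ((G.histOf σ τ s₀ s).last.1) := pickInf_mem _ _ _
        have hattain := pickInf_eq (Tl G ((G.histOf σ τ s₀ s).last.1))
              (fun δ => ((δ.price : ℝ) : EReal) + Vit G ν (n - s - 1) δ.tgt) hne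
        have hinf : Vit G ν (n - s) ((G.histOf σ τ s₀ s).last.1) =
            ((δs.price : ℝ) : EReal) + Vit G ν (n - s - 1) δs.tgt := by
          calc Vit G ν (n - s) ((G.histOf σ τ s₀ s).last.1)
              = Vit G ν ((n - s - 1) + 1) ((G.histOf σ τ s₀ s).last.1) := by rw [← hsub]
            _ = (Tl G ((G.histOf σ τ s₀ s).last.1)).inf
                (fun δ => ((δ.price : ℝ) : EReal) + Vit G ν (n - s - 1) δ.tgt) :=
              Vit_succ_min (by rw [hm]; simp) hm _
            _ = ((δs.price : ℝ) : EReal) + Vit G ν (n - s - 1) δs.tgt := hattain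
        have htd : (if G.owner ((G.histOf σ τ s₀ s).last.1) = Owner.min
            then σ (G.histOf σ τ s₀ s) else τ (G.histOf σ τ s₀ s)) = (0, δs) := by
          rw [if_pos hm, hσh]
        rw [htd] at hdisc hlast
        have hl1 : (G.histOf σ τ s₀ (s+1)).last.1 = δs.tgt := by rw [hlast]; rfl
        rw [hdisc, hl1, hsub2]
        have : (((((G.histOf σ τ s₀ s).discSum + δs.price : ℤ) : ℝ)) : EReal) =
            ((((G.histOf σ τ s₀ s).discSum : ℝ)) : EReal) +
              ((δs.price : ℝ) : EReal) := by
          push_cast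
          try ring
        rw [this, add_assoc, ← hinf]
        exact ihs
      · -- Max moves
        have hmax : G.owner ((G.histOf σ τ s₀ s).last.1) = Owner.max := by
          cases hcase : G.owner ((G.histOf σ τ s₀ s).last.1) with
          | min => exact absurd hcase hm
          | max => rfl
          | final => exact absurd hcase hfs
        obtain ⟨s', c, mv⟩ := hτ (G.histOf σ τ s₀ s) (hvalid s) hmax
        have hmf := move_facts hwf hsptg hurg mv
        have htd : (if G.owner ((G.histOf σ τ s₀ s).last.1) = Owner.min
            then σ (G.histOf σ τ s₀ s) else τ (G.histOf σ τ s₀ s)) =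
            τ (G.histOf σ τ s₀ s) := if_neg hm
        rw [htd] at hdisc hlast
        set δs := (τ (G.histOf σ τ s₀ s)).2 with hδdef
        have hδmem : δs ∈ Tl G ((G.histOf σ τ s₀ s).last.1) := hmf.2.2.2.1
        have hsup : ((δs.price : ℝ) : EReal) + Vit G ν (n - s - 1) δs.tgt ≤
            Vit G ν (n - s) ((G.histOf σ τ s₀ s).last.1) := by
          calc ((δs.price : ℝ) : EReal) + Vit G ν (n - s - 1) δs.tgt
              ≤ (Tl G ((G.histOf σ τ s₀ s).last.1)).sup
                (fun δ => ((δ.price : ℝ) : EReal) + Vit G ν (n - s - 1) δ.tgt) :=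
              Finset.le_sup
                (f := fun δ => ((δ.price : ℝ) : EReal) + Vit G ν (n - s - 1) δ.tgt) hδmem
            _ = Vit G ν ((n - s - 1) + 1) ((G.histOf σ τ s₀ s).last.1) :=
              (Vit_succ_max (by rw [hmax]; simp) hm _).symm
            _ = Vit G ν (n - s) ((G.histOf σ τ s₀ s).last.1) := by rw [← hsub]
        have hl1 : (G.histOf σ τ s₀ (s+1)).last.1 = δs.tgt := by rw [hlast]; rfl
        rw [hdisc, hl1, hsub2]
        have hcast : (((((G.histOf σ τ s₀ s).discSum + δs.price : ℤ) : ℝ)) : EReal) =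
            ((((G.histOf σ τ s₀ s).discSum : ℝ)) : EReal) +
              ((δs.price : ℝ) : EReal) := by
          push_cast
          try ring
        rw [hcast, add_assoc]
        refine le_trans (add_le_add_right hsup _) ihs
  -- a final location is reached within `n` steps
  have hex2 : ∃ m, m ≤ n ∧ G.owner ((G.histOf σ τ s₀ m).last.1) = Owner.final := by
    by_contra hno
    push_neg at hno
    have hinv := inv n le_rfl (fun m hm => hno m (le_of_lt hm))
    rw [Nat.sub_self, Vit_zero_nonfinal (hno n le_rfl)] at hinv
    have htop : ((((G.histOf σ τ s₀ n).discSum : ℝ)) : EReal) + (⊤ : EReal) = ⊤ := rfl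
    rw [htop] at hinv
    exact hT (top_le_iff.1 hinv)
  obtain ⟨m0, hm0n, hm0⟩ := hex2
  have hex : ∃ m, G.owner ((G.histOf σ τ s₀ m).last.1) = Owner.final := ⟨m0, hm0⟩
  rw [PTG.playCost, dif_pos hex]
  set m := Nat.find hex with hmdef
  have hmn : m ≤ n := Nat.find_min' hex hm0 |>.trans hm0n
  have hfin : G.owner ((G.histOf σ τ s₀ m).last.1) = Owner.final := Nat.find_spec hex
  have hmin : ∀ k, k < m → ¬ G.owner ((G.histOf σ τ s₀ k).last.1) = Owner.final :=
    fun k hk => Nat.find_min hex hk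
  have hacc : G.accCost (G.histOf σ τ s₀ m) = (((G.histOf σ τ s₀ m).discSum : ℤ) : ℝ) :=
    accCost_eq_discSum hwf hsptg hurg (hvalid m)
  have hclk : (G.histOf σ τ s₀ m).last.2 = ν :=
    histOf_clock σ τ s₀ hwf hsptg hurg hσ hτ h0 hM m
  have hinv := inv m hmn hmin
  rw [Vit_final hfin] at hinv
  rw [hacc, hclk]
  calc ((((G.histOf σ τ s₀ m).discSum : ℝ) +
        G.fcost ((G.histOf σ τ s₀ m).last.1) ν : ℝ) : EReal)
      = ((((G.histOf σ τ s₀ m).discSum : ℝ)) : EReal) +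
        ((G.fcost ((G.histOf σ τ s₀ m).last.1) ν : ℝ) : EReal) := EReal.coe_add _ _
    _ ≤ Vit G ν n ℓ0 := hinv

lemma Vom_le_playCost_maxGreedy (h0 : 0 ≤ ν) (hM : ν ≤ (G.M : ℝ)) (ℓ0 : G.Loc)
    {σ : StratFun G.Loc} (hσ : G.MinValid σ) :
    Vom G ν ℓ0 ≤ G.playCost σ (maxGreedy G ν ℓ0) (ℓ0, ν) := by
  set τ : StratFun G.Loc := maxGreedy G ν ℓ0 with hτdef
  have hτ : G.MaxValid τ := maxGreedy_valid hwf hsptg hurg ν ℓ0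
  set s₀ : G.Config := (ℓ0, ν) with hs₀def
  have hvalid : ∀ m, G.HistValid (G.histOf σ τ s₀ m) :=
    histOf_valid σ τ s₀ hwf hsptg hurg hσ hτ h0 hM
  have inv : ∀ s,
      (∀ m, m < s → ¬ G.owner ((G.histOf σ τ s₀ m).last.1) = Owner.final) →
      Vom G ν ℓ0 ≤ ((((G.histOf σ τ s₀ s).discSum : ℝ)) : EReal) +
        Vom G ν ((G.histOf σ τ s₀ s).last.1) := by
    intro s
    induction s with
    | zero =>
      intro _
      have h1 : (G.histOf σ τ s₀ 0).discSum = 0 := rfl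
      have h2 : (G.histOf σ τ s₀ 0).last = s₀ := rfl
      rw [h1, h2]
      simp
      exact le_rfl
    | succ s ih =>
      intro hnf
      have hfs : ¬ G.owner ((G.histOf σ τ s₀ s).last.1) = Owner.final :=
        hnf s (Nat.lt_succ_self s)
      have ihs := ih (fun m hm => hnf m (hm.trans (Nat.lt_succ_self s)))
      have hdisc := histOf_discSum_succ_nf σ τ s₀ hfs
      have hlast := histOf_last_succ_nf σ τ s₀ hfs
      by_cases hm : G.owner ((G.histOf σ τ s₀ s).last.1) = Owner.min
      · -- Min moves, use the fixpoint inequality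
        obtain ⟨s', c, mv⟩ := hσ (G.histOf σ τ s₀ s) (hvalid s) hm
        have hmf := move_facts hwf hsptg hurg mv
        have htd : (if G.owner ((G.histOf σ τ s₀ s).last.1) = Owner.min
            then σ (G.histOf σ τ s₀ s) else τ (G.histOf σ τ s₀ s)) =
            σ (G.histOf σ τ s₀ s) := if_pos hm
        rw [htd] at hdisc hlast
        set δs := (σ (G.histOf σ τ s₀ s)).2 with hδdef
        have hδmem : δs ∈ Tl G ((G.histOf σ τ s₀ s).last.1) := hmf.2.2.2.1
        have hstep : Vom G ν ((G.histOf σ τ s₀ s).last.1) ≤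
            ((δs.price : ℝ) : EReal) + Vom G ν δs.tgt :=
          Vom_le_step_min hfs hm hδmem
        have hl1 : (G.histOf σ τ s₀ (s+1)).last.1 = δs.tgt := by rw [hlast]; rfl
        rw [hdisc, hl1]
        have hcast : (((((G.histOf σ τ s₀ s).discSum + δs.price : ℤ) : ℝ)) : EReal) =
            ((((G.histOf σ τ s₀ s).discSum : ℝ)) : EReal) +
              ((δs.price : ℝ) : EReal) := by
          push_cast
          try ring
        rw [hcast, add_assoc]
        exact ihs.trans (add_le_add_right hstep _)
      · -- Max moves greedily
        have hne : (Tl G ((G.histOf σ τ s₀ s).last.1)).Nonempty :=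
          Tl_nonempty hwf hfs
        have hτh : τ (G.histOf σ τ s₀ s) =
            (0, pickSup (Tl G ((G.histOf σ τ s₀ s).last.1))
              (fun δ => ((δ.price : ℝ) : EReal) + Vom G ν δ.tgt) hne) := by
          show maxGreedy G ν ℓ0 (G.histOf σ τ s₀ s) = _
          simp only [maxGreedy]
          rw [dif_pos hne]
        set δs := pickSup (Tl G ((G.histOf σ τ s₀ s).last.1))
              (fun δ => ((δ.price : ℝ) : EReal) + Vom G ν δ.tgt) hne with hδdef
        have hδmem : δs ∈ Tl G ((G.histOf σ τ s₀ s).last.1) := pickSup_mem _ _ _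
        have hstep : Vom G ν ((G.histOf σ τ s₀ s).last.1) ≤
            ((δs.price : ℝ) : EReal) + Vom G ν δs.tgt := by
          refine (Vom_le_sup_max hfs hm).trans ?_
          rw [pickSup_eq (Tl G ((G.histOf σ τ s₀ s).last.1))
            (fun δ => ((δ.price : ℝ) : EReal) + Vom G ν δ.tgt) hne]
        have htd : (if G.owner ((G.histOf σ τ s₀ s).last.1) = Owner.min
            then σ (G.histOf σ τ s₀ s) else τ (G.histOf σ τ s₀ s)) = (0, δs) := by
          rw [if_neg hm, hτh]
        rw [htd] at hdisc hlast
        have hl1 : (G.histOf σ τ s₀ (s+1)).last.1 = δs.tgt := by rw [hlast]; rfl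
        rw [hdisc, hl1]
        have hcast : (((((G.histOf σ τ s₀ s).discSum + δs.price : ℤ) : ℝ)) : EReal) =
            ((((G.histOf σ τ s₀ s).discSum : ℝ)) : EReal) +
              ((δs.price : ℝ) : EReal) := by
          push_cast
          try ring
        rw [hcast, add_assoc]
        exact ihs.trans (add_le_add_right hstep _)
  by_cases hex : ∃ m, G.owner ((G.histOf σ τ s₀ m).last.1) = Owner.final
  · rw [PTG.playCost, dif_pos hex]
    set m := Nat.find hex with hmdef
    have hfin : G.owner ((G.histOf σ τ s₀ m).last.1) = Owner.final := Nat.find_spec hex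
    have hmin : ∀ k, k < m → ¬ G.owner ((G.histOf σ τ s₀ k).last.1) = Owner.final :=
      fun k hk => Nat.find_min hex hk
    have hacc : G.accCost (G.histOf σ τ s₀ m) = (((G.histOf σ τ s₀ m).discSum : ℤ) : ℝ) :=
      accCost_eq_discSum hwf hsptg hurg (hvalid m)
    have hclk : (G.histOf σ τ s₀ m).last.2 = ν :=
      histOf_clock σ τ s₀ hwf hsptg hurg hσ hτ h0 hM m
    have hinv := inv m hmin
    rw [Vom_final hfin] at hinv
    rw [hacc, hclk]
    calc Vom G ν ℓ0
        ≤ ((((G.histOf σ τ s₀ m).discSum : ℝ)) : EReal) +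
          ((G.fcost ((G.histOf σ τ s₀ m).last.1) ν : ℝ) : EReal) := hinv
      _ = ((((G.histOf σ τ s₀ m).discSum : ℝ) +
          G.fcost ((G.histOf σ τ s₀ m).last.1) ν : ℝ) : EReal) := (EReal.coe_add _ _).symm
  · rw [PTG.playCost, dif_neg hex]
    exact le_top

end PlayBounds

section ValEq

lemma lval_le_uval (s : G.Config) : G.lval s ≤ G.uval s := by
  rw [PTG.lval, PTG.uval]
  refine iSup_le fun τ => le_iInf fun σ => ?_
  rw [PTG.maxValue, PTG.minValue]
  exact le_trans
    (iInf_le (fun σ' : {σ' : StratFun G.Loc // G.MinValid σ'} => G.playCost σ'.1 τ.1 s) σ)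
    (le_iSup (fun τ' : {τ' : StratFun G.Loc // G.MaxValid τ'} => G.playCost σ.1 τ'.1 s) τ)

variable (hwf : G.WF) {r : ℚ} (hsptg : G.IsSPTG (r : ℝ))
    (hurg : ∀ ℓ : G.Loc, G.owner ℓ ≠ Owner.final → G.urgent ℓ = true)
    {ν : ℝ}

include hwf hsptg hurg

lemma val_eq_Vom {ℓ0 : G.Loc} (hnf : G.owner ℓ0 ≠ Owner.final)
    (h0 : 0 ≤ ν) (hνr : ν ≤ (r : ℝ)) :
    G.val (ℓ0, ν) = Vom G ν ℓ0 := by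
  have hM : ν ≤ (G.M : ℝ) := by rw [M_eq_r hwf hsptg hnf]; exact hνr
  have hle1 : G.uval (ℓ0, ν) ≤ Vom G ν ℓ0 := by
    refine le_iInf fun n => ?_
    have hσv := minGreedy_valid hwf hsptg hurg ν ℓ0 n
    rw [PTG.uval]
    refine le_trans (iInf_le
      (fun σ' : {σ' : StratFun G.Loc // G.MinValid σ'} => G.minValue σ'.1 (ℓ0, ν))
      ⟨_, hσv⟩) ?_
    rw [PTG.minValue]
    exact iSup_le fun τ' => playCost_minGreedy_le hwf hsptg hurg h0 hM ℓ0 n τ'.2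
  have hle2 : Vom G ν ℓ0 ≤ G.lval (ℓ0, ν) := by
    have hτv := maxGreedy_valid hwf hsptg hurg ν ℓ0
    rw [PTG.lval]
    refine le_trans ?_ (le_iSup
      (fun τ' : {τ' : StratFun G.Loc // G.MaxValid τ'} => G.maxValue τ'.1 (ℓ0, ν))
      ⟨_, hτv⟩)
    rw [PTG.maxValue]
    exact le_iInf fun σ' => Vom_le_playCost_maxGreedy hwf hsptg hurg h0 hM ℓ0 σ'.2
  rw [PTG.val]
  exact le_antisymm ((lval_le_uval (ℓ0, ν)).trans hle1) hle2

omit hwf hsptg hurg in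
lemma playCost_final {ℓ : G.Loc} (hf : G.owner ℓ = Owner.final)
    (σ τ : StratFun G.Loc) :
    G.playCost σ τ (ℓ, ν) = ((G.fcost ℓ ν : ℝ) : EReal) := by
  have hx : ∃ n, G.owner ((G.histOf σ τ (ℓ, ν) n).last.1) = Owner.final := ⟨0, hf⟩
  rw [PTG.playCost, dif_pos hx]
  have h0' : Nat.find hx = 0 := (Nat.find_eq_zero hx).2 hf
  rw [h0']
  have hacc : G.accCost (G.histOf σ τ (ℓ, ν) 0) = 0 := rfl
  have hlast : (G.histOf σ τ (ℓ, ν) 0).last = (ℓ, ν) := rfl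
  rw [hacc, hlast]
  norm_num

lemma val_final {ℓ : G.Loc} (hf : G.owner ℓ = Owner.final) (ℓ0 : G.Loc) :
    G.val (ℓ, ν) = ((G.fcost ℓ ν : ℝ) : EReal) := by
  have hσne : Nonempty {σ' : StratFun G.Loc // G.MinValid σ'} :=
    ⟨⟨defStrat G ℓ0, defStrat_valid hwf hsptg hurg ℓ0 Owner.min (by simp)⟩⟩
  have hτne : Nonempty {τ' : StratFun G.Loc // G.MaxValid τ'} :=
    ⟨⟨defStrat G ℓ0, defStrat_valid hwf hsptg hurg ℓ0 Owner.max (by simp)⟩⟩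
  rw [PTG.val, PTG.lval]
  have h1 : ∀ τ' : {τ' : StratFun G.Loc // G.MaxValid τ'},
      G.maxValue τ'.1 (ℓ, ν) = ((G.fcost ℓ ν : ℝ) : EReal) := by
    intro τ'
    rw [PTG.maxValue]
    have h2 : ∀ σ' : {σ' : StratFun G.Loc // G.MinValid σ'},
        G.playCost σ'.1 τ'.1 (ℓ, ν) = ((G.fcost ℓ ν : ℝ) : EReal) :=
      fun σ' => playCost_final hf σ'.1 τ'.1
    simp only [h2]
    exact iInf_const
  simp only [h1]
  exact iSup_const

end ValEq

section Path

variable {ν : ℝ}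

lemma price_natAbs_le_PT {ℓ : G.Loc} {δ : PTrans G.Loc} (hδ : δ ∈ Tl G ℓ) :
    δ.price.natAbs ≤ G.PT :=
  Finset.le_sup (f := fun δ => δ.price.natAbs) (mem_Tl.1 hδ).1

variable (hwf : G.WF)

include hwf

lemma Vit_mem : ∀ (n : ℕ) (ℓ : G.Loc), Vit G ν n ℓ = ⊤ ∨
    ∃ (k : ℤ) (ℓf : G.Loc), G.owner ℓf = Owner.final ∧
      Vit G ν n ℓ = (((k : ℝ) + G.fcost ℓf ν : ℝ) : EReal) := by
  intro n
  induction n with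
  | zero =>
    intro ℓ
    by_cases hf : G.owner ℓ = Owner.final
    · exact Or.inr ⟨0, ℓ, hf, by rw [Vit_final hf]; norm_num⟩
    · exact Or.inl (Vit_zero_nonfinal hf)
  | succ n ih =>
    intro ℓ
    by_cases hf : G.owner ℓ = Owner.final
    · exact Or.inr ⟨0, ℓ, hf, by rw [Vit_final hf]; norm_num⟩
    have hne := Tl_nonempty hwf hf
    by_cases hm : G.owner ℓ = Owner.min
    · set δs := pickInf (Tl G ℓ)
        (fun δ => ((δ.price : ℝ) : EReal) + Vit G ν n δ.tgt) hne with hδdef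
      have heq : Vit G ν (n+1) ℓ = ((δs.price : ℝ) : EReal) + Vit G ν n δs.tgt := by
        rw [Vit_succ_min hf hm, pickInf_eq _ _ hne]
      rcases ih δs.tgt with h | ⟨k, ℓf, hffin, h⟩
      · left; rw [heq, h]; rfl
      · right
        refine ⟨δs.price + k, ℓf, hffin, ?_⟩
        rw [heq, h, ← EReal.coe_add, EReal.coe_eq_coe_iff]
        push_cast
        ring
    · set δs := pickSup (Tl G ℓ)
        (fun δ => ((δ.price : ℝ) : EReal) + Vit G ν n δ.tgt) hne with hδdef
      have heq : Vit G ν (n+1) ℓ = ((δs.price : ℝ) : EReal) + Vit G ν n δs.tgt := by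
        rw [Vit_succ_max hf hm, pickSup_eq _ _ hne]
      rcases ih δs.tgt with h | ⟨k, ℓf, hffin, h⟩
      · left; rw [heq, h]; rfl
      · right
        refine ⟨δs.price + k, ℓf, hffin, ?_⟩
        rw [heq, h, ← EReal.coe_add, EReal.coe_eq_coe_iff]
        push_cast
        ring

omit hwf in
lemma Dfin (a c : ℝ) : Set.Finite {x : ℝ |
    (∃ (k : ℤ) (ℓf : G.Loc), G.owner ℓf = Owner.final ∧ x = (k : ℝ) + G.fcost ℓf ν) ∧
    a ≤ x ∧ x ≤ c} := by
  refine Set.Finite.subset (Set.Finite.biUnion (Set.finite_univ (α := G.Loc))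
    (fun ℓf _ => Set.Finite.image (fun k : ℤ => (k : ℝ) + G.fcost ℓf ν)
      (Set.finite_Icc (⌈a - G.fcost ℓf ν⌉ : ℤ) ⌊c - G.fcost ℓf ν⌋))) ?_
  rintro x ⟨⟨k, ℓf, hfin, rfl⟩, hax, hxc⟩
  refine Set.mem_biUnion (Set.mem_univ ℓf) ?_
  exact ⟨k, Set.mem_Icc.2 ⟨Int.ceil_le.2 (by linarith), Int.le_floor.2 (by linarith)⟩, rfl⟩

lemma Vom_stab {ℓ : G.Loc} {v : ℝ} (hv : Vom G ν ℓ = ((v : ℝ) : EReal)) :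
    ∃ N, Vit G ν N ℓ = ((v : ℝ) : EReal) := by
  have hlt : (⨅ n, Vit G ν n ℓ) < ⊤ := by
    rw [show (⨅ n, Vit G ν n ℓ) = Vom G ν ℓ from rfl, hv]
    exact EReal.coe_lt_top v
  obtain ⟨N₀, hN₀⟩ := iInf_lt_iff.1 hlt
  rcases Vit_mem hwf N₀ ℓ with h | ⟨k0, ℓf0, hf0, hx0⟩
  · rw [h] at hN₀; exact absurd hN₀ (lt_irrefl _)
  set x₀ : ℝ := (k0 : ℝ) + G.fcost ℓf0 ν with hx₀def
  have hbase : ∀ n, ((v : ℝ) : EReal) ≤ Vit G ν n ℓ := by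
    intro n; rw [← hv]; exact Vom_le_Vit n ℓ
  set A' := {x : ℝ |
      ((∃ (k : ℤ) (ℓf : G.Loc), G.owner ℓf = Owner.final ∧ x = (k : ℝ) + G.fcost ℓf ν) ∧
        v ≤ x ∧ x ≤ x₀) ∧ ∃ n, N₀ ≤ n ∧ Vit G ν n ℓ = ((x : ℝ) : EReal)} with hA'def
  have hA'fin : A'.Finite :=
    (Dfin (G := G) (ν := ν) v x₀).subset (fun x hx => hx.1)
  have hvx₀ : v ≤ x₀ := by
    have := hbase N₀
    rw [hx0] at this
    exact EReal.coe_le_coe_iff.1 this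
  have hx₀mem : x₀ ∈ A' := ⟨⟨⟨k0, ℓf0, hf0, rfl⟩, hvx₀, le_rfl⟩, N₀, le_rfl, hx0⟩
  have hne : hA'fin.toFinset.Nonempty := ⟨x₀, hA'fin.mem_toFinset.2 hx₀mem⟩
  set μ := hA'fin.toFinset.min' hne with hμdef
  have hμmem : μ ∈ A' := hA'fin.mem_toFinset.1 (hA'fin.toFinset.min'_mem hne)
  obtain ⟨_, n₁, hn₁N₀, hn₁⟩ := hμmem
  have hclaim : ∀ n, n₁ ≤ n → Vit G ν n ℓ = ((μ : ℝ) : EReal) := by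
    intro n hn
    have hle : Vit G ν n ℓ ≤ ((μ : ℝ) : EReal) := by
      rw [← hn₁]; exact Vit_anti ℓ hn
    rcases Vit_mem hwf n ℓ with h | ⟨k, ℓf, hffin, hx⟩
    · rw [h] at hle; exact absurd (top_le_iff.1 hle) (EReal.coe_ne_top μ)
    have hxA : ((k : ℝ) + G.fcost ℓf ν) ∈ A' := by
      refine ⟨⟨⟨k, ℓf, hffin, rfl⟩, ?_, ?_⟩, n, hn₁N₀.trans hn, hx⟩
      · have := hbase n; rw [hx] at this; exact EReal.coe_le_coe_iff.1 this
      · have h2 : Vit G ν n ℓ ≤ Vit G ν N₀ ℓ := Vit_anti ℓ (hn₁N₀.trans hn)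
        rw [hx, hx0] at h2
        exact EReal.coe_le_coe_iff.1 h2
    have hμle : μ ≤ (k : ℝ) + G.fcost ℓf ν :=
      hA'fin.toFinset.min'_le _ (hA'fin.mem_toFinset.2 hxA)
    have hxleμ : (k : ℝ) + G.fcost ℓf ν ≤ μ := by
      rw [hx] at hle; exact EReal.coe_le_coe_iff.1 hle
    rw [hx]
    exact congrArg _ (le_antisymm hxleμ hμle)
  have hinf : (⨅ n, Vit G ν n ℓ) = ((μ : ℝ) : EReal) := by
    refine le_antisymm ((iInf_le _ n₁).trans_eq hn₁) (le_iInf fun n => ?_)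
    rcases le_or_gt n₁ n with h | h
    · rw [hclaim n h]
    · rw [← hn₁]; exact Vit_anti ℓ (le_of_lt h)
  have : ((v : ℝ) : EReal) = ((μ : ℝ) : EReal) := by rw [← hv]; exact hinf
  exact ⟨n₁, by rw [hn₁, ← EReal.coe_eq_coe_iff.1 this]⟩

end Path

section Witness

variable {ν : ℝ}

/-- Stabilisation time of the value iteration. -/
noncomputable def Nfun (G : PTG) (ν : ℝ) (ℓ : G.Loc) : ℕ :=
  if h : ∃ n, Vit G ν n ℓ = Vom G ν ℓ then Nat.find h else 0

lemma Nfun_le {ℓ : G.Loc} {m : ℕ} (hm : Vit G ν m ℓ = Vom G ν ℓ) :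
    Nfun G ν ℓ ≤ m := by
  rw [Nfun, dif_pos ⟨m, hm⟩]
  exact Nat.find_min' _ hm

variable (hwf : G.WF)
include hwf

lemma Nfun_spec {ℓ : G.Loc} {v : ℝ} (hv : Vom G ν ℓ = ((v : ℝ) : EReal)) :
    Vit G ν (Nfun G ν ℓ) ℓ = Vom G ν ℓ := by
  obtain ⟨N, hN⟩ := Vom_stab hwf hv
  have hex : ∃ n, Vit G ν n ℓ = Vom G ν ℓ := ⟨N, by rw [hN, hv]⟩
  rw [Nfun, dif_pos hex]
  exact Nat.find_spec hex

lemma step_witness {ℓ : G.Loc} {v : ℝ} (hnf : G.owner ℓ ≠ Owner.final)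
    (hreal : Vom G ν ℓ = ((v : ℝ) : EReal)) :
    ∃ (δ : PTrans G.Loc) (w : ℝ), δ ∈ Tl G ℓ ∧ Vom G ν δ.tgt = ((w : ℝ) : EReal) ∧
      v = (δ.price : ℝ) + w ∧ Nfun G ν δ.tgt < Nfun G ν ℓ := by
  have hspec : Vit G ν (Nfun G ν ℓ) ℓ = ((v : ℝ) : EReal) := by
    rw [Nfun_spec hwf hreal, hreal]
  have hN1 : Nfun G ν ℓ ≠ 0 := by
    intro h
    rw [h, Vit_zero_nonfinal hnf] at hspec
    exact EReal.coe_ne_top v hspec.symm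
  obtain ⟨N', hN'⟩ : ∃ N', Nfun G ν ℓ = N' + 1 := ⟨Nfun G ν ℓ - 1, by omega⟩
  rw [hN'] at hspec
  have hne := Tl_nonempty hwf hnf
  by_cases hm : G.owner ℓ = Owner.min
  · set δs := pickInf (Tl G ℓ)
      (fun δ => ((δ.price : ℝ) : EReal) + Vit G ν N' δ.tgt) hne with hδdef
    have hδmem : δs ∈ Tl G ℓ := pickInf_mem _ _ _
    have hatt : ((δs.price : ℝ) : EReal) + Vit G ν N' δs.tgt = ((v : ℝ) : EReal) := by
      rw [← pickInf_eq (Tl G ℓ)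
        (fun δ => ((δ.price : ℝ) : EReal) + Vit G ν N' δ.tgt) hne,
        ← Vit_succ_min hnf hm N', hspec]
    have hlow : ((v : ℝ) : EReal) ≤ ((δs.price : ℝ) : EReal) + Vom G ν δs.tgt := by
      rw [← hreal]; exact Vom_le_step_min hnf hm hδmem
    have hup : ((δs.price : ℝ) : EReal) + Vom G ν δs.tgt ≤ ((v : ℝ) : EReal) := by
      rw [← hatt]; exact add_le_add_right (Vom_le_Vit N' δs.tgt) _
    have heq : ((δs.price : ℝ) : EReal) + Vom G ν δs.tgt = ((v : ℝ) : EReal) :=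
      le_antisymm hup hlow
    have hcancel : Vit G ν N' δs.tgt = Vom G ν δs.tgt :=
      ereal_coe_add_cancel_left (hatt.trans heq.symm)
    have htgt : Vom G ν δs.tgt = ((v - δs.price : ℝ) : EReal) := ereal_coe_add_eq_coe heq
    refine ⟨δs, v - (δs.price : ℝ), hδmem, by exact_mod_cast htgt, by ring, ?_⟩
    rw [hN']
    exact Nat.lt_succ_of_le (Nfun_le hcancel)
  · set δs := pickSup (Tl G ℓ)
      (fun δ => ((δ.price : ℝ) : EReal) + Vom G ν δ.tgt) hne with hδdef
    have hδmem : δs ∈ Tl G ℓ := pickSup_mem _ _ _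
    have hsupeq : ((δs.price : ℝ) : EReal) + Vom G ν δs.tgt = ((v : ℝ) : EReal) := by
      rw [← pickSup_eq (Tl G ℓ)
        (fun δ => ((δ.price : ℝ) : EReal) + Vom G ν δ.tgt) hne]
      refine le_antisymm ((sup_le_Vom_max hnf hm).trans_eq hreal) ?_
      rw [← hreal]
      exact Vom_le_sup_max hnf hm
    have hup : ((δs.price : ℝ) : EReal) + Vit G ν N' δs.tgt ≤ ((v : ℝ) : EReal) := by
      rw [← hspec, Vit_succ_max hnf hm N']
      exact Finset.le_sup
        (f := fun δ => ((δ.price : ℝ) : EReal) + Vit G ν N' δ.tgt) hδmem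
    have hlow : ((v : ℝ) : EReal) ≤ ((δs.price : ℝ) : EReal) + Vit G ν N' δs.tgt := by
      rw [← hsupeq]
      exact add_le_add_right (Vom_le_Vit N' δs.tgt) _
    have hcancel : Vit G ν N' δs.tgt = Vom G ν δs.tgt :=
      ereal_coe_add_cancel_left ((le_antisymm hup hlow).trans hsupeq.symm)
    have htgt : Vom G ν δs.tgt = ((v - δs.price : ℝ) : EReal) := ereal_coe_add_eq_coe hsupeq
    refine ⟨δs, v - (δs.price : ℝ), hδmem, by exact_mod_cast htgt, by ring, ?_⟩
    rw [hN']
    exact Nat.lt_succ_of_le (Nfun_le hcancel)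

end Witness

section PathBound

open Classical in
/-- The set of non-final locations with finite value stabilising by time `K`. -/
noncomputable def Sset (G : PTG) (ν : ℝ) (K : ℕ) : Finset G.Loc :=
  Finset.univ.filter (fun ℓ' => G.owner ℓ' ≠ Owner.final ∧
    (∃ w : ℝ, Vom G ν ℓ' = ((w : ℝ) : EReal)) ∧ Nfun G ν ℓ' ≤ K)

lemma mem_Sset {ν : ℝ} {K : ℕ} {ℓ : G.Loc} :
    ℓ ∈ Sset G ν K ↔ G.owner ℓ ≠ Owner.final ∧
      (∃ w : ℝ, Vom G ν ℓ = ((w : ℝ) : EReal)) ∧ Nfun G ν ℓ ≤ K := by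
  simp [Sset]

lemma Sset_mono {ν : ℝ} {K K' : ℕ} (h : K ≤ K') : Sset G ν K ⊆ Sset G ν K' := by
  intro ℓ hℓ
  rw [mem_Sset] at hℓ ⊢
  exact ⟨hℓ.1, hℓ.2.1, hℓ.2.2.trans h⟩

variable {ν : ℝ} (hwf : G.WF)
include hwf

lemma path_bound : ∀ K : ℕ, ∀ {ℓ : G.Loc} {v : ℝ},
    Vom G ν ℓ = ((v : ℝ) : EReal) → Nfun G ν ℓ = K →
    ∃ (k : ℤ) (ℓf : G.Loc), G.owner ℓf = Owner.final ∧
      v = (k : ℝ) + G.fcost ℓf ν ∧ k.natAbs ≤ (Sset G ν K).card * G.PT := by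
  intro K
  induction K using Nat.strong_induction_on with
  | _ K IH =>
    intro ℓ v hreal hNK
    by_cases hf : G.owner ℓ = Owner.final
    · refine ⟨0, ℓ, hf, ?_, by simp⟩
      have := Vom_final (ν := ν) hf
      rw [hreal] at this
      have hv := EReal.coe_eq_coe_iff.1 this
      rw [← hv]
      norm_num
    · obtain ⟨δ, w, hδ, hw, hvw, hlt⟩ := step_witness hwf hf hreal
      rw [hNK] at hlt
      obtain ⟨k', ℓf, hffin, hwk, hk'⟩ := IH _ hlt hw rfl
      have hmemℓ : ℓ ∈ Sset G ν K := mem_Sset.2 ⟨hf, ⟨v, hreal⟩, le_of_eq hNK⟩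
      have hnot : ℓ ∉ Sset G ν (Nfun G ν δ.tgt) := by
        intro hc
        have := (mem_Sset.1 hc).2.2
        rw [hNK] at this
        omega
      have hsub : insert ℓ (Sset G ν (Nfun G ν δ.tgt)) ⊆ Sset G ν K := by
        refine Finset.insert_subset hmemℓ (Sset_mono (le_of_lt hlt))
      have hcard : (Sset G ν (Nfun G ν δ.tgt)).card + 1 ≤ (Sset G ν K).card := by
        have := Finset.card_le_card hsub
        rwa [Finset.card_insert_of_notMem hnot] at this
      refine ⟨δ.price + k', ℓf, hffin, ?_, ?_⟩
      · rw [hvw, hwk]; push_cast; ring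
      · calc (δ.price + k').natAbs ≤ δ.price.natAbs + k'.natAbs := Int.natAbs_add_le _ _
          _ ≤ G.PT + (Sset G ν (Nfun G ν δ.tgt)).card * G.PT :=
            add_le_add (price_natAbs_le_PT hδ) hk'
          _ = ((Sset G ν (Nfun G ν δ.tgt)).card + 1) * G.PT := by ring
          _ ≤ (Sset G ν K).card * G.PT := Nat.mul_le_mul_right _ hcard

end PathBound

section PfLemmas

lemma Pf_bddAbove (hwf : G.WF) {rr : ℝ} (hr0 : 0 ≤ rr) :
    BddAbove {x : ℝ | ∃ (ℓ : G.Loc) (ν' : ℝ), G.owner ℓ = Owner.final ∧ 0 ≤ ν' ∧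
      ν' ≤ rr ∧ x = |G.fcost ℓ ν'|} := by
  classical
  have haff := hwf.2.2.2.1
  set bnd : G.Loc → ℝ := fun ℓ =>
    if h : G.owner ℓ = Owner.final then
      |((haff ℓ h).choose : ℝ)| * rr + |(((haff ℓ h).choose_spec).choose : ℝ)|
    else 0 with hbnd
  have hbnd0 : ∀ ℓ, 0 ≤ bnd ℓ := by
    intro ℓ
    rw [hbnd]
    dsimp only
    split
    · positivity
    · exact le_rfl
  refine ⟨∑ ℓ : G.Loc, bnd ℓ, ?_⟩
  rintro x ⟨ℓ, ν', hf, h0, h1, rfl⟩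
  have hspec := ((haff ℓ hf).choose_spec).choose_spec ν'
  have hle : |G.fcost ℓ ν'| ≤ bnd ℓ := by
    rw [hspec, hbnd]
    dsimp only
    rw [dif_pos hf]
    calc |((haff ℓ hf).choose : ℝ) * ν' + (((haff ℓ hf).choose_spec).choose : ℝ)|
        ≤ |((haff ℓ hf).choose : ℝ) * ν'| + |(((haff ℓ hf).choose_spec).choose : ℝ)| :=
          abs_add_le _ _
      _ = |((haff ℓ hf).choose : ℝ)| * |ν'| + |(((haff ℓ hf).choose_spec).choose : ℝ)| := by
          rw [abs_mul]
      _ ≤ |((haff ℓ hf).choose : ℝ)| * rr + |(((haff ℓ hf).choose_spec).choose : ℝ)| := by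
          have : |ν'| ≤ rr := by rw [abs_of_nonneg h0]; exact h1
          have := mul_le_mul_of_nonneg_left this (abs_nonneg ((haff ℓ hf).choose : ℝ))
          linarith
  exact hle.trans (Finset.single_le_sum (fun ℓ' _ => hbnd0 ℓ') (Finset.mem_univ ℓ))

lemma abs_fcost_le_Pf (hwf : G.WF) {rr : ℝ} (hr0 : 0 ≤ rr) {ℓ : G.Loc} {ν' : ℝ}
    (hf : G.owner ℓ = Owner.final) (h0 : 0 ≤ ν') (h1 : ν' ≤ rr) :
    |G.fcost ℓ ν'| ≤ G.Pf rr :=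
  le_csSup (Pf_bddAbove hwf hr0) ⟨ℓ, ν', hf, h0, h1, rfl⟩

lemma Pf_nonneg_of_final (hwf : G.WF) {rr : ℝ} (hr0 : 0 ≤ rr) {ℓ : G.Loc}
    (hf : G.owner ℓ = Owner.final) : 0 ≤ G.Pf rr :=
  (abs_nonneg (G.fcost ℓ 0)).trans (abs_fcost_le_Pf hwf hr0 hf le_rfl hr0)

end PfLemmas

end GameDev

/-- Corollary 3: in an `r`-SPTG with only urgent (non-final) locations,
for every `ν ∈ [0, r]` and every location `ℓ`, `Val_G(ℓ, ν)` belongs to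
`possval_ν ∪ {−∞, +∞}`; moreover `possval_ν` has at most
`|L_f|·((2|L|−1)·P_T + 2·P_f + 1)` elements. -/
theorem urgent_sptg_possval (G : PTG) (hwf : G.WF) (r : ℚ) (hsptg : G.IsSPTG (r : ℝ))
    (hurg : ∀ ℓ : G.Loc, G.owner ℓ ≠ Owner.final → G.urgent ℓ = true)
    (ν : ℝ) (h0 : 0 ≤ ν) (hν : ν ≤ (r : ℝ)) :
    (∀ ℓ : G.Loc, G.val (ℓ, ν) = ⊤ ∨ G.val (ℓ, ν) = ⊥ ∨
      ∃ x ∈ G.possval (r : ℝ) ν, G.val (ℓ, ν) = (x : EReal)) ∧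
    (G.possval (r : ℝ) ν).Finite ∧
    ((G.possval (r : ℝ) ν).ncard : ℝ) ≤
      (G.nFin : ℝ) * ((2 * (G.nLoc : ℝ) - 1) * (G.PT : ℝ) + 2 * G.Pf (r : ℝ) + 1) := by
  classical
  have hr0 : (0 : ℝ) ≤ (r : ℝ) := hsptg.1
  rcases isEmpty_or_nonempty G.Loc with hemp | hnemp
  · -- no locations at all
    have hpv : G.possval (r : ℝ) ν = ∅ := by
      ext x
      simp only [PTG.possval, PTG.Zstar, Set.mem_setOf_eq, Set.mem_empty_iff_false, iff_false,
        not_and]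
      rintro ⟨n, ℓ, _⟩
      exact (hemp.false ℓ).elim
    refine ⟨fun ℓ => (hemp.false ℓ).elim, by rw [hpv]; exact Set.finite_empty, ?_⟩
    rw [hpv]
    have hnFin : G.nFin = 0 := by
      rw [PTG.nFin, Finset.univ_eq_empty]
      simp
    rw [hnFin]
    simp
  · have ℓex : G.Loc := Classical.arbitrary G.Loc
    have hcard1 : 1 ≤ G.nLoc := by rw [PTG.nLoc]; exact Fintype.card_pos
    have hcard1R : (1 : ℝ) ≤ (G.nLoc : ℝ) := by exact_mod_cast hcard1
    have hPT0 : (0 : ℝ) ≤ (G.PT : ℝ) := Nat.cast_nonneg _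
    constructor
    · -- part 1: value membership
      intro ℓ
      by_cases hf : G.owner ℓ = Owner.final
      · right; right
        have hPf0 : 0 ≤ G.Pf (r : ℝ) := Pf_nonneg_of_final hwf hr0 hf
        have habs : |G.fcost ℓ ν| ≤ G.Pf (r : ℝ) := abs_fcost_le_Pf hwf hr0 hf h0 hν
        have hnn : (0 : ℝ) ≤ ((G.nLoc : ℝ) - 1) * (G.PT : ℝ) := by nlinarith
        refine ⟨G.fcost ℓ ν, ⟨⟨0, ℓ, hf, by norm_num⟩, ?_, ?_⟩,
          val_final hwf hsptg hurg hf ℓex⟩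
        · have := neg_abs_le (G.fcost ℓ ν)
          linarith
        · have h1 : (0 : ℝ) ≤ (G.nLoc : ℝ) * (G.PT : ℝ) := by positivity
          have := le_abs_self (G.fcost ℓ ν)
          linarith
      · have hval := val_eq_Vom hwf hsptg hurg hf h0 hν
        rcases erealCases (Vom G ν ℓ) with hc | hc | ⟨v, hc⟩
        · right; left; rw [hval, hc]
        · left; rw [hval, hc]
        · right; right
          obtain ⟨k, ℓf, hffin, hvk, hk⟩ := path_bound hwf (Nfun G ν ℓ) hc rfl
          have hPf0 : 0 ≤ G.Pf (r : ℝ) := Pf_nonneg_of_final hwf hr0 hffin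
          have habs : |G.fcost ℓf ν| ≤ G.Pf (r : ℝ) := abs_fcost_le_Pf hwf hr0 hffin h0 hν
          have hsub : Sset G ν (Nfun G ν ℓ) ⊆ Finset.univ.erase ℓf := by
            intro ℓ' hℓ'
            refine Finset.mem_erase.2 ⟨?_, Finset.mem_univ _⟩
            intro hEq
            exact (mem_Sset.1 hℓ').1 (hEq ▸ hffin)
          have hcard : (Sset G ν (Nfun G ν ℓ)).card ≤ G.nLoc - 1 := by
            have h1 := Finset.card_le_card hsub
            rwa [Finset.card_erase_of_mem (Finset.mem_univ _), Finset.card_univ] at h1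
          have hkabs : |(k : ℝ)| ≤ ((G.nLoc : ℝ) - 1) * (G.PT : ℝ) := by
            have h1 : (k.natAbs : ℝ) ≤ (((G.nLoc - 1) * G.PT : ℕ) : ℝ) := by
              exact_mod_cast hk.trans (Nat.mul_le_mul_right _ hcard)
            rw [Nat.cast_natAbs, Int.cast_abs] at h1
            rwa [Nat.cast_mul, Nat.cast_sub hcard1, Nat.cast_one] at h1
          refine ⟨v, ⟨⟨k, ℓf, hffin, hvk⟩, ?_, ?_⟩, by rw [hval, hc]⟩
          · rw [hvk]
            have h2 := neg_abs_le (k : ℝ)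
            have h3 := neg_abs_le (G.fcost ℓf ν)
            linarith
          · rw [hvk]
            have h2 := le_abs_self (k : ℝ)
            have h3 := le_abs_self (G.fcost ℓf ν)
            linarith
    · -- parts 2 and 3: finiteness and cardinality of possval
      by_cases hfin : ∃ ℓf : G.Loc, G.owner ℓf = Owner.final
      · obtain ⟨ℓf0, hℓf0⟩ := hfin
        have hPf0 : 0 ≤ G.Pf (r : ℝ) := Pf_nonneg_of_final hwf hr0 hℓf0
        set lo : ℝ := -(((G.nLoc : ℝ) - 1) * (G.PT : ℝ)) - G.Pf (r : ℝ) with hlodef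
        set hi : ℝ := (G.nLoc : ℝ) * (G.PT : ℝ) + G.Pf (r : ℝ) with hhidef
        set Bd : ℝ := (2 * (G.nLoc : ℝ) - 1) * (G.PT : ℝ) + 2 * G.Pf (r : ℝ) + 1 with hBddef
        set Fcand : Finset ℝ :=
          (Finset.univ.filter fun ℓ : G.Loc => G.owner ℓ = Owner.final).biUnion
            (fun ℓf => (Finset.Icc (⌈lo - G.fcost ℓf ν⌉ : ℤ) ⌊hi - G.fcost ℓf ν⌋).image
              (fun k : ℤ => (k : ℝ) + G.fcost ℓf ν)) with hFdef
        have hsubset : G.possval (r : ℝ) ν ⊆ ↑Fcand := by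
          rintro x ⟨⟨k, ℓf, hffin, rfl⟩, hxlo, hxhi⟩
          refine Finset.mem_coe.2 (Finset.mem_biUnion.2
            ⟨ℓf, Finset.mem_filter.2 ⟨Finset.mem_univ _, hffin⟩, ?_⟩)
          exact Finset.mem_image.2 ⟨k, Finset.mem_Icc.2
            ⟨Int.ceil_le.2 (by linarith), Int.le_floor.2 (by linarith)⟩, rfl⟩
        have hfinite : (G.possval (r : ℝ) ν).Finite :=
          Set.Finite.subset (Fcand.finite_toSet) hsubset
        refine ⟨hfinite, ?_⟩
        have hBd1 : (1 : ℝ) ≤ Bd := by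
          rw [hBddef]
          nlinarith
        have hIcc : ∀ ℓf : G.Loc,
            (((Finset.Icc (⌈lo - G.fcost ℓf ν⌉ : ℤ) ⌊hi - G.fcost ℓf ν⌋).card : ℕ) : ℝ) ≤ Bd := by
          intro ℓf
          rw [Int.card_Icc]
          rcases le_or_gt (⌈lo - G.fcost ℓf ν⌉ : ℤ) ⌊hi - G.fcost ℓf ν⌋ with hle | hlt
          · have hnn : (0 : ℤ) ≤ ⌊hi - G.fcost ℓf ν⌋ + 1 - ⌈lo - G.fcost ℓf ν⌉ := by omega
            have hcast : ((((⌊hi - G.fcost ℓf ν⌋ + 1 - ⌈lo - G.fcost ℓf ν⌉ : ℤ).toNat : ℕ)) : ℝ) =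
                ((⌊hi - G.fcost ℓf ν⌋ + 1 - ⌈lo - G.fcost ℓf ν⌉ : ℤ) : ℝ) := by
              exact_mod_cast congrArg (fun z : ℤ => (z : ℝ)) (Int.toNat_of_nonneg hnn)
            rw [hcast]
            push_cast
            have hf1 : ((⌊hi - G.fcost ℓf ν⌋ : ℤ) : ℝ) ≤ hi - G.fcost ℓf ν := Int.floor_le _
            have hf2 : lo - G.fcost ℓf ν ≤ ((⌈lo - G.fcost ℓf ν⌉ : ℤ) : ℝ) := Int.le_ceil _
            have hEq : hi - lo + 1 = Bd := by rw [hhidef, hlodef, hBddef]; ring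
            linarith
          · have hz : (⌊hi - G.fcost ℓf ν⌋ + 1 - ⌈lo - G.fcost ℓf ν⌉ : ℤ) ≤ 0 := by omega
            rw [Int.toNat_of_nonpos hz]
            simp only [Nat.cast_zero]
            linarith
        have hcardle : ((Fcand.card : ℕ) : ℝ) ≤ (G.nFin : ℝ) * Bd := by
          have h1 : Fcand.card ≤
              ∑ ℓf ∈ (Finset.univ.filter fun ℓ : G.Loc => G.owner ℓ = Owner.final),
                ((Finset.Icc (⌈lo - G.fcost ℓf ν⌉ : ℤ) ⌊hi - G.fcost ℓf ν⌋).image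
                  (fun k : ℤ => (k : ℝ) + G.fcost ℓf ν)).card :=
            Finset.card_biUnion_le
          calc ((Fcand.card : ℕ) : ℝ)
              ≤ ∑ ℓf ∈ (Finset.univ.filter fun ℓ : G.Loc => G.owner ℓ = Owner.final),
                  (((((Finset.Icc (⌈lo - G.fcost ℓf ν⌉ : ℤ) ⌊hi - G.fcost ℓf ν⌋).image
                    (fun k : ℤ => (k : ℝ) + G.fcost ℓf ν)).card) : ℕ) : ℝ) := by
                exact_mod_cast h1
            _ ≤ ∑ ℓf ∈ (Finset.univ.filter fun ℓ : G.Loc => G.owner ℓ = Owner.final), Bd := by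
                refine Finset.sum_le_sum (fun ℓf _ => ?_)
                refine le_trans ?_ (hIcc ℓf)
                exact_mod_cast Finset.card_image_le
            _ = ((Finset.univ.filter fun ℓ : G.Loc =>
                  G.owner ℓ = Owner.final).card : ℝ) * Bd := by
                rw [Finset.sum_const, nsmul_eq_mul]
            _ = (G.nFin : ℝ) * Bd := by rw [PTG.nFin]
        refine le_trans ?_ hcardle
        have h2 := Set.ncard_le_ncard hsubset (Fcand.finite_toSet)
        rw [Set.ncard_coe_finset] at h2
        exact_mod_cast h2
      · push_neg at hfin
        have hpv : G.possval (r : ℝ) ν = ∅ := by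
          ext x
          simp only [PTG.possval, PTG.Zstar, Set.mem_setOf_eq, Set.mem_empty_iff_false,
            iff_false, not_and]
          rintro ⟨n, ℓf', hf', _⟩
          exact (hfin ℓf' hf').elim
        refine ⟨by rw [hpv]; exact Set.finite_empty, ?_⟩
        rw [hpv]
        have hnFin : G.nFin = 0 := by
          rw [PTG.nFin, Finset.card_eq_zero]
          ext ℓ'
          simp [hfin ℓ']
        rw [hnFin]
        simp

end PTGPaper
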